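/- Let ξ ∈ Sh(p,q) and K ⊆ [q]. The map τ_ξ defined by τ_ξ(u × v) = (u × v)ξ⁻¹ is a convex embedding of B_p × B_{q,K} (the set {u × v : u ∈ B_p, v ∈ B_q, Nega(v) = K} with the weak order induced from B_{p+q}) into B_{p+q} with the weak order; in particular, this restriction preserves all meets and joins that exist. -/

import Mathlib

open Finset

open scoped Classical

/-- The hyperoctahedral group `𝔅ₙ`, realized as the set of those permutations `w` of `ℤ`
that satisfy `w (-i) = - w i` for all `i` and fix every integer of absolute value `> n`.
One-line notation: `w₁ ⋯ w_n` with `w_i = w i` for `1 ≤ i ≤ n`. -/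
def SignedPerm (n : ℕ) : Set (Equiv.Perm ℤ) :=
  {w | (∀ i : ℤ, w (-i) = - w i) ∧ (∀ i : ℤ, (n : ℤ) < |i| → w i = i)}

/-- The inversion set `Inv(w) = {(i,j) : 1 ≤ i < j ≤ n, w_i > w_j}`. -/
noncomputable def InvSet (n : ℕ) (w : Equiv.Perm ℤ) : Finset (ℤ × ℤ) :=
  ((Finset.Icc (1 : ℤ) (n : ℤ)) ×ˢ (Finset.Icc (1 : ℤ) (n : ℤ))).filter
    fun p => p.1 < p.2 ∧ w p.2 < w p.1

/-- The set of negative indices `Nega(w) = {i ∈ [n] : w_i < 0}`. -/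
noncomputable def NegaSet (n : ℕ) (w : Equiv.Perm ℤ) : Finset ℤ :=
  (Finset.Icc (1 : ℤ) (n : ℤ)).filter fun i => w i < 0

/-- The negative sum pair set `Nsp(w) = {(i,j) : 1 ≤ i < j ≤ n, w_i + w_j < 0}`. -/
noncomputable def NspSet (n : ℕ) (w : Equiv.Perm ℤ) : Finset (ℤ × ℤ) :=
  ((Finset.Icc (1 : ℤ) (n : ℤ)) ×ˢ (Finset.Icc (1 : ℤ) (n : ℤ))).filter
    fun p => p.1 < p.2 ∧ w p.1 + w p.2 < 0

/-- The Coxeter length of `w ∈ 𝔅ₙ`: `ℓ(w) = #Inv(w) + #Nega(w) + #Nsp(w)`. -/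
noncomputable def blen (n : ℕ) (w : Equiv.Perm ℤ) : ℕ :=
  (InvSet n w).card + (NegaSet n w).card + (NspSet n w).card

/-- The left weak order on `𝔅ₙ`: `u ≤ v` iff `ℓ(v) = ℓ(u) + ℓ(v * u⁻¹)`. -/
def wle (n : ℕ) (u v : Equiv.Perm ℤ) : Prop :=
  blen n v = blen n u + blen n (v * u⁻¹)

/-- The Coxeter generators of `𝔅ₙ`: `s₀ = (1,-1)` and `sᵢ = (i,i+1)(-i,-(i+1))` for `i ≥ 1`. -/
def sB (i : ℕ) : Equiv.Perm ℤ :=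
  if i = 0 then Equiv.swap 1 (-1)
  else Equiv.swap (i : ℤ) ((i : ℤ) + 1) * Equiv.swap (-(i : ℤ)) (-((i : ℤ) + 1))

/-- `a[p] = a + p` if `a > 0`, `a - p` if `a < 0` (and `0 ↦ 0`). -/
def shiftFun (p : ℕ) (b : ℤ) : ℤ :=
  if 0 < b then b + (p : ℤ) else if b < 0 then b - (p : ℤ) else 0

/-- `w` is the shifted product `u × v ∈ 𝔅_{p+q}` of `u ∈ 𝔅_p` and `v ∈ 𝔅_q`:
its one-line notation is `(u₁, …, u_p, v₁[p], …, v_q[p])`. -/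
def IsSProd (p q : ℕ) (u v w : Equiv.Perm ℤ) : Prop :=
  w ∈ SignedPerm (p + q) ∧
  (∀ a : ℤ, 1 ≤ a → a ≤ (p : ℤ) → w a = u a) ∧
  (∀ a : ℤ, (p : ℤ) < a → a ≤ (p : ℤ) + (q : ℤ) → w a = shiftFun p (v (a - (p : ℤ))))

/-- `ξ` is a `(p,q)`-shuffle: an element of `𝔅_{p+q}` with positive entries (a permutation)
that is increasing on each of the blocks `[1,p]` and `[p+1,p+q]`. -/
def IsShuffle (p q : ℕ) (ξ : Equiv.Perm ℤ) : Prop :=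
  ξ ∈ SignedPerm (p + q) ∧
  (∀ a : ℤ, 1 ≤ a → a ≤ (p : ℤ) + (q : ℤ) → 0 < ξ a) ∧
  (∀ a b : ℤ, 1 ≤ a → a < b → b ≤ (p : ℤ) → ξ a < ξ b) ∧
  (∀ a b : ℤ, (p : ℤ) < a → a < b → b ≤ (p : ℤ) + (q : ℤ) → ξ a < ξ b)

/-- `w` is the standard signed permutation `sts(a₁ ⋯ a_m)` of the word `a₁ ⋯ a_m = a 1, …, a m`
(of nonzero integers): the unique `w ∈ 𝔅_m` with the same negative index set and
`|w_i| < |w_j| ↔ |a_i| ≤ |a_j|` for `1 ≤ i < j ≤ m`. -/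
def IsSts (m : ℕ) (a : ℤ → ℤ) (w : Equiv.Perm ℤ) : Prop :=
  w ∈ SignedPerm m ∧
  (∀ i : ℤ, 1 ≤ i → i ≤ (m : ℤ) → (w i < 0 ↔ a i < 0)) ∧
  (∀ i j : ℤ, 1 ≤ i → i < j → j ≤ (m : ℤ) → (|w i| < |w j| ↔ |a i| ≤ |a j|))

/-- The standard signed permutation of a word, as a function. -/
noncomputable def sts (m : ℕ) (a : ℤ → ℤ) : Equiv.Perm ℤ :=
  if h : ∃ w, IsSts m a w then h.choose else 1

/-- Descent set of `w ∈ 𝔅ₙ`: `Des(w) = {i ∈ [0,n-1] : w_i > w_{i+1}}` with `w₀ = 0`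
(note `w 0 = 0` holds automatically). -/
def DesSet (n : ℕ) (w : Equiv.Perm ℤ) : Finset ℕ :=
  (Finset.range n).filter fun i => w ((i : ℤ) + 1) < w (i : ℤ)

/-- Global descent set of `u ∈ 𝔅ₙ`. -/
noncomputable def GDesSet (n : ℕ) (u : Equiv.Perm ℤ) : Finset ℕ :=
  (Finset.Ico 1 n).filter fun i =>
    ∀ j k : ℤ, 1 ≤ j → j ≤ (i : ℤ) → (i : ℤ) < k → k ≤ (n : ℤ) → u k < u j

/-- `m` is the meet (greatest lower bound) of `x` and `y` within `S`, w.r.t. the weak order. -/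
def IsMeetIn (n : ℕ) (S : Set (Equiv.Perm ℤ)) (x y m : Equiv.Perm ℤ) : Prop :=
  m ∈ S ∧ wle n m x ∧ wle n m y ∧ ∀ z ∈ S, wle n z x → wle n z y → wle n z m

/-- `j` is the join (least upper bound) of `x` and `y` within `S`, w.r.t. the weak order. -/
def IsJoinIn (n : ℕ) (S : Set (Equiv.Perm ℤ)) (x y j : Equiv.Perm ℤ) : Prop :=
  j ∈ S ∧ wle n x j ∧ wle n y j ∧ ∀ z ∈ S, wle n x z → wle n y z → wle n j z

/-- The set `𝔅_p × 𝔅_{q,K} ⊆ 𝔅_{p+q}` of shifted products `u × v` with `u ∈ 𝔅_p`,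
`v ∈ 𝔅_q`, `Nega(v) = K`. -/
def SProdComp (p q : ℕ) (K : Finset ℤ) : Set (Equiv.Perm ℤ) :=
  {w | ∃ u v : Equiv.Perm ℤ, u ∈ SignedPerm p ∧ v ∈ SignedPerm q ∧ NegaSet q v = K ∧
        IsSProd p q u v w}

/-- `w` is the iterated shifted product `u⁽¹⁾ × ⋯ × u⁽ᵏ⁾` of the list `us` of signed
permutations with block sizes given by the list `ps`. -/
def IsMultiSProd (ps : List ℕ) (us : List (Equiv.Perm ℤ)) (w : Equiv.Perm ℤ) : Prop :=
  w ∈ SignedPerm ps.sum ∧ us.length = ps.length ∧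
  ∀ i < ps.length,
    us.getD i 1 ∈ SignedPerm (ps.getD i 0) ∧
    ∀ a : ℤ, ((ps.take i).sum : ℤ) < a → a ≤ ((ps.take i).sum : ℤ) + (ps.getD i 0 : ℤ) →
      w a = shiftFun ((ps.take i).sum) ((us.getD i 1) (a - ((ps.take i).sum : ℤ)))

/-- The subset `𝔅_{p₁} × 𝔅_{p₂} × ⋯ × 𝔅_{p_k}` of `𝔅_{p₁+⋯+p_k}`. -/
def MultiProdSet (ps : List ℕ) : Set (Equiv.Perm ℤ) :=
  {w | ∃ us, IsMultiSProd ps us w}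

/-- The `(L₂,…,L_k)`-component `𝔅_{p₁} × 𝔅_{p₂,L₂} × ⋯ × 𝔅_{p_k,L_k}`, where
`Ls.getD (i-1) ∅` is the prescribed negative index set of the `(i+1)`-st factor. -/
def ComponentSet (ps : List ℕ) (Ls : List (Finset ℤ)) : Set (Equiv.Perm ℤ) :=
  {w | ∃ us, IsMultiSProd ps us w ∧
        ∀ i, 1 ≤ i → i < ps.length →
          NegaSet (ps.getD i 0) (us.getD i 1) = Ls.getD (i - 1) ∅}

/-- `ξ ∈ Sh(p₁,…,p_k)`: a permutation in `𝔅_{p₁+⋯+p_k}` (all entries positive)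
increasing on each consecutive block. -/
def IsMultiShuffle (ps : List ℕ) (ξ : Equiv.Perm ℤ) : Prop :=
  ξ ∈ SignedPerm ps.sum ∧
  (∀ a : ℤ, 1 ≤ a → a ≤ (ps.sum : ℤ) → 0 < ξ a) ∧
  ∀ i < ps.length, ∀ a b : ℤ,
    ((ps.take i).sum : ℤ) < a → a < b → b ≤ ((ps.take i).sum : ℤ) + (ps.getD i 0 : ℤ) →
      ξ a < ξ b


theorem Equiv.Perm.apply_inv_self (f : Equiv.Perm ℤ) (x : ℤ) : f (f⁻¹ x) = x :=
  f.apply_symm_apply x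

theorem Equiv.Perm.inv_apply_self (f : Equiv.Perm ℤ) (x : ℤ) : f⁻¹ (f x) = x :=
  f.symm_apply_apply x

namespace TauAux

theorem sp_zero {n : ℕ} {w : Equiv.Perm ℤ} (h : w ∈ SignedPerm n) : w 0 = 0 := by
  have h0 := h.1 0
  simp only [neg_zero] at h0
  omega

theorem sp_mul {n : ℕ} {u v : Equiv.Perm ℤ} (hu : u ∈ SignedPerm n) (hv : v ∈ SignedPerm n) :
    u * v ∈ SignedPerm n := by
  constructor
  · intro i
    rw [Equiv.Perm.mul_apply, Equiv.Perm.mul_apply, hv.1 i, hu.1]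
  · intro i hi
    rw [Equiv.Perm.mul_apply, hv.2 i hi, hu.2 i hi]

theorem sp_inv {n : ℕ} {w : Equiv.Perm ℤ} (hw : w ∈ SignedPerm n) : w⁻¹ ∈ SignedPerm n := by
  constructor
  · intro i
    apply w.injective
    rw [Equiv.Perm.apply_inv_self, hw.1, Equiv.Perm.apply_inv_self]
  · intro i hi
    have h2 := hw.2 i hi
    calc w⁻¹ i = w⁻¹ (w i) := by rw [h2]
    _ = i := w.inv_apply_self i

theorem sp_one {n : ℕ} : (1 : Equiv.Perm ℤ) ∈ SignedPerm n := by
  constructor <;> intro i <;> simp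

theorem sp_bound {n : ℕ} {w : Equiv.Perm ℤ} (hw : w ∈ SignedPerm n) {i : ℤ}
    (hi : |i| ≤ (n : ℤ)) : |w i| ≤ (n : ℤ) := by
  by_contra hc
  push_neg at hc
  have h2 := (sp_inv hw).2 (w i) hc
  have h3 : i = w i := by
    conv_lhs => rw [← w.inv_apply_self i]
    rw [h2]
  rw [← h3] at hc
  omega

theorem sp_eq_zero {n : ℕ} {w : Equiv.Perm ℤ} (hw : w ∈ SignedPerm n) {i : ℤ} :
    w i = 0 ↔ i = 0 := by
  constructor
  · intro h
    have := sp_zero hw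
    exact w.injective (by rw [h, this])
  · rintro rfl; exact sp_zero hw

theorem perm_ne {w : Equiv.Perm ℤ} {i j : ℤ} (h : i ≠ j) : w i ≠ w j :=
  fun hc => h (w.injective hc)

/-- The combined inversion set: pairs `(i,j)` with `|i| < j ≤ n` encode the positive
root `e_j - e_i` (with `e_0 = 0`, `e_{-k} = -e_k`), and membership means `w j < w i`. -/
noncomputable def NSet (n : ℕ) (w : Equiv.Perm ℤ) : Finset (ℤ × ℤ) :=
  ((Finset.Icc (-(n : ℤ)) (n : ℤ)) ×ˢ (Finset.Icc (1 : ℤ) (n : ℤ))).filter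
    fun r => |r.1| < r.2 ∧ w r.2 < w r.1

theorem mem_NSet {n : ℕ} {w : Equiv.Perm ℤ} {r : ℤ × ℤ} :
    r ∈ NSet n w ↔ |r.1| < r.2 ∧ r.2 ≤ (n : ℤ) ∧ w r.2 < w r.1 := by
  unfold NSet
  rw [Finset.mem_filter, Finset.mem_product, Finset.mem_Icc, Finset.mem_Icc]
  have h1 := abs_nonneg r.1
  rcases abs_choice r.1 with e|e
  · constructor
    · rintro ⟨⟨_, hj⟩, ha, hb⟩; exact ⟨ha, hj.2, hb⟩
    · rintro ⟨ha, hb, hc⟩; exact ⟨⟨⟨by omega, by omega⟩, by omega, hb⟩, ha, hc⟩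
  · constructor
    · rintro ⟨⟨_, hj⟩, ha, hb⟩; exact ⟨ha, hj.2, hb⟩
    · rintro ⟨ha, hb, hc⟩; exact ⟨⟨⟨by omega, by omega⟩, by omega, hb⟩, ha, hc⟩

theorem mem_NSet' {n : ℕ} {w : Equiv.Perm ℤ} {i j : ℤ} :
    (i, j) ∈ NSet n w ↔ |i| < j ∧ j ≤ (n : ℤ) ∧ w j < w i := mem_NSet

theorem blen_eq {n : ℕ} {w : Equiv.Perm ℤ} (hw : w ∈ SignedPerm n) :
    blen n w = (NSet n w).card := by
  classical
  have h1 := Finset.card_filter_add_card_filter_not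
    (s := NSet n w) (p := fun r => 0 < r.1)
  have h2 := Finset.card_filter_add_card_filter_not
    (s := (NSet n w).filter (fun r => ¬ 0 < r.1)) (p := fun r => r.1 = 0)
  rw [Finset.filter_filter, Finset.filter_filter] at h2
  have ea : (NSet n w).filter (fun r => 0 < r.1) = InvSet n w := by
    ext r
    rw [Finset.mem_filter, mem_NSet]
    unfold InvSet
    rw [Finset.mem_filter, Finset.mem_product, Finset.mem_Icc, Finset.mem_Icc]
    constructor
    · rintro ⟨⟨ha, hb, hc⟩, hd⟩
      rw [abs_of_pos hd] at ha
      exact ⟨⟨⟨by omega, by omega⟩, by omega, hb⟩, ha, hc⟩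
    · rintro ⟨⟨⟨ha, hb⟩, hc, hd⟩, he, hf⟩
      have hx : |r.1| = r.1 := abs_of_pos (by omega)
      exact ⟨⟨by omega, hd, hf⟩, by omega⟩
  have eb : ((NSet n w).filter (fun r => ¬ 0 < r.1 ∧ r.1 = 0)).card = (NegaSet n w).card := by
    apply Finset.card_nbij' (i := fun r => r.2) (j := fun i => ((0 : ℤ), i))
    · intro r hr; beta_reduce
      rw [Finset.mem_coe, Finset.mem_filter, mem_NSet] at hr
      obtain ⟨⟨ha, hb, hc⟩, _, hz⟩ := hr
      have h0 := abs_nonneg r.1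
      unfold NegaSet
      rw [Finset.mem_coe, Finset.mem_filter, Finset.mem_Icc]
      rw [hz, sp_zero hw] at hc
      exact ⟨⟨by omega, hb⟩, hc⟩
    · intro i hi; beta_reduce
      unfold NegaSet at hi
      rw [Finset.mem_coe, Finset.mem_filter, Finset.mem_Icc] at hi
      rw [Finset.mem_coe, Finset.mem_filter, mem_NSet']
      rw [sp_zero hw]
      refine ⟨⟨by simp; omega, hi.1.2, hi.2⟩, by omega, rfl⟩
    · intro r hr
      rw [Finset.mem_coe, Finset.mem_filter] at hr
      have := hr.2.2
      ext <;> simp [this.symm]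
    · intro i _
      rfl
  have ec : ((NSet n w).filter (fun r => ¬ 0 < r.1 ∧ ¬ r.1 = 0)).card = (NspSet n w).card := by
    apply Finset.card_nbij' (i := fun r => (-r.1, r.2)) (j := fun r => (-r.1, r.2))
    · intro r hr
      rw [Finset.mem_coe, Finset.mem_filter, mem_NSet] at hr
      obtain ⟨⟨ha, hb, hc⟩, hd, he⟩ := hr
      have h0 := abs_nonneg r.1
      have hx : |r.1| = -r.1 := abs_of_neg (by omega)
      unfold NspSet
      rw [Finset.mem_coe, Finset.mem_filter, Finset.mem_product, Finset.mem_Icc, Finset.mem_Icc]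
      dsimp only
      have hodd : w (-r.1) = - w r.1 := hw.1 r.1
      refine ⟨⟨⟨by omega, by omega⟩, by omega, hb⟩, by omega, by omega⟩
    · intro r hr; beta_reduce
      unfold NspSet at hr
      rw [Finset.mem_coe, Finset.mem_filter, Finset.mem_product, Finset.mem_Icc, Finset.mem_Icc] at hr
      obtain ⟨⟨⟨h1', h2'⟩, h3', h4'⟩, h5', h6'⟩ := hr
      rw [Finset.mem_coe, Finset.mem_filter, mem_NSet']
      have hodd : w (-r.1) = - w r.1 := hw.1 r.1
      have hx : |r.1| = r.1 := abs_of_pos (by omega)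
      refine ⟨⟨by rw [abs_neg]; omega, h4', by omega⟩, by omega, by omega⟩
    · intro r _; ext <;> simp
    · intro r _; ext <;> simp
  rw [ea] at h1
  unfold blen
  omega

end TauAux
namespace TauAux

/-- Canonicalization of a root `e_b - e_a` (as existential, uniform in `w`). -/
theorem canon {n a b : ℤ} (hab : a ≠ b) (hab' : a ≠ -b) (ha : |a| ≤ n) (hb : |b| ≤ n) :
    ∃ i j : ℤ, |i| < j ∧ j ≤ n ∧
      ((∀ w : Equiv.Perm ℤ, (∀ r, w (-r) = - w r) → (w j < w i ↔ w b < w a)) ∨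
       (∀ w : Equiv.Perm ℤ, (∀ r, w (-r) = - w r) → (w j < w i ↔ w a < w b))) := by
  have hcov : |a| < b ∨ |b| < -a ∨ |b| < a ∨ |a| < -b := by
    rcases abs_choice a with e|e <;> rcases abs_choice b with f|f <;> omega
  have ha2 := le_abs_self a
  have ha3 := neg_abs_le a
  have hb2 := le_abs_self b
  have hb3 := neg_abs_le b
  rcases hcov with h|h|h|h
  · exact ⟨a, b, h, by omega, Or.inl fun w _ => Iff.rfl⟩
  · refine ⟨-b, -a, by rw [abs_neg]; omega, by omega, Or.inl fun w hw => ?_⟩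
    rw [hw a, hw b]
    exact neg_lt_neg_iff
  · exact ⟨b, a, h, by omega, Or.inr fun w _ => Iff.rfl⟩
  · refine ⟨-a, -b, by rw [abs_neg]; omega, by omega, Or.inr fun w hw => ?_⟩
    rw [hw a, hw b]
    exact neg_lt_neg_iff

/-- Canonical form of the root `e_b - e_a`, as a function (for bijections). -/
def cnorm (a b : ℤ) : ℤ × ℤ :=
  if |a| < b then (a, b) else if |b| < -a then (-b, -a) else if |b| < a then (b, a)
  else (-a, -b)

theorem cnorm_cases (a b : ℤ) :
    cnorm a b = (a, b) ∨ cnorm a b = (-b, -a) ∨ cnorm a b = (b, a) ∨ cnorm a b = (-a, -b) := by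
  unfold cnorm; split_ifs <;> tauto

theorem cnorm_canon' {n a b i j : ℤ} (h1 : a ≠ b) (h2 : a ≠ -b) (ha : |a| ≤ n) (hb : |b| ≤ n)
    (h : cnorm a b = (i, j)) : |i| < j ∧ j ≤ n := by
  have e1 := abs_neg a
  have e2 := abs_neg b
  have g1 := le_abs_self a
  have g2 := neg_abs_le a
  have g3 := le_abs_self b
  have g4 := neg_abs_le b
  unfold cnorm at h
  rcases abs_choice a with e|e <;> rcases abs_choice b with f|f <;>
    split_ifs at h with c1 c2 c3 <;> rw [Prod.mk.injEq] at h <;>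
    obtain ⟨rfl, rfl⟩ := h <;> constructor <;> omega

theorem cnorm_id1 {a b : ℤ} (h : |a| < b) : cnorm a b = (a, b) := by
  unfold cnorm; rw [if_pos h]

theorem cnorm_id2 {a b : ℤ} (h : |a| < b) : cnorm (-b) (-a) = (a, b) := by
  have e1 := abs_neg a
  have e2 := abs_neg b
  have g1 := le_abs_self a
  have g2 := neg_abs_le a
  have g3 := le_abs_self b
  unfold cnorm
  rw [if_neg (by omega), if_pos (by omega), neg_neg, neg_neg]

theorem cnorm_id3 {a b : ℤ} (h : |a| < b) : cnorm b a = (a, b) := by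
  have g1 := le_abs_self a
  have g2 := neg_abs_le a
  have g3 := le_abs_self b
  have g4 := neg_abs_le b
  have g0 := abs_nonneg a
  unfold cnorm
  rw [if_neg (by omega), if_neg (by omega), if_pos (by omega)]

theorem cnorm_id4 {a b : ℤ} (h : |a| < b) : cnorm (-a) (-b) = (a, b) := by
  have e1 := abs_neg a
  have e2 := abs_neg b
  have g1 := le_abs_self a
  have g2 := neg_abs_le a
  have g3 := le_abs_self b
  have g0 := abs_nonneg a
  unfold cnorm
  rw [if_neg (by omega), if_neg (by omega), if_neg (by omega), neg_neg, neg_neg]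

/-- The length of `v * u⁻¹` counts the symmetric difference of inversion sets. -/
theorem len_sub {n : ℕ} {u v : Equiv.Perm ℤ} (hu : u ∈ SignedPerm n) (hv : v ∈ SignedPerm n) :
    blen n (v * u⁻¹) = ((NSet n v) \ (NSet n u)).card + ((NSet n u) \ (NSet n v)).card := by
  classical
  rw [blen_eq (sp_mul hv (sp_inv hu))]
  rw [← Finset.card_union_of_disjoint (disjoint_sdiff_sdiff)]
  apply Finset.card_nbij' (i := fun r => cnorm (u⁻¹ r.1) (u⁻¹ r.2))
    (j := fun r => cnorm (u r.1) (u r.2))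
  · -- forward map
    intro r hr; beta_reduce
    rw [Finset.mem_coe, mem_NSet] at hr
    obtain ⟨ha, hb, hc⟩ := hr
    have hA1 := le_abs_self r.1
    have hA2 := neg_abs_le r.1
    have hA0 := abs_nonneg r.1
    have hA3 : |r.2| = r.2 := abs_of_pos (by omega)
    set A := u⁻¹ r.1 with hA
    set B := u⁻¹ r.2 with hB
    have hne1 : A ≠ B := perm_ne (by omega)
    have hne2 : A ≠ -B := by
      rw [hB, ← (sp_inv hu).1 r.2]
      exact perm_ne (by omega)
    have hb1 : |A| ≤ (n : ℤ) := sp_bound (sp_inv hu) (by omega)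
    have hb2 : |B| ≤ (n : ℤ) := sp_bound (sp_inv hu) (by omega)
    have hcmp : v B < v A := by exact hc
    have huA : u A = r.1 := u.apply_inv_self r.1
    have huB : u B = r.2 := u.apply_inv_self r.2
    have hunA : u (-A) = -r.1 := by rw [hu.1, huA]
    have hunB : u (-B) = -r.2 := by rw [hu.1, huB]
    have hvnA : v (-A) = - v A := hv.1 A
    have hvnB : v (-B) = - v B := hv.1 B
    have hvne : v A ≠ v B := perm_ne hne1
    rw [Finset.mem_coe, Finset.mem_union, Finset.mem_sdiff, Finset.mem_sdiff]
    rcases cnorm_cases A B with h|h|h|h <;> rw [h] <;>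
      simp only [mem_NSet', not_and, not_lt]
    · have hcan := cnorm_canon' hne1 hne2 hb1 hb2 h
      exact Or.inl ⟨⟨hcan.1, hcan.2, hcmp⟩, fun _ _ => by omega⟩
    · have hcan := cnorm_canon' hne1 hne2 hb1 hb2 h
      exact Or.inl ⟨⟨hcan.1, hcan.2, by omega⟩, fun _ _ => by omega⟩
    · have hcan := cnorm_canon' hne1 hne2 hb1 hb2 h
      exact Or.inr ⟨⟨hcan.1, hcan.2, by omega⟩, fun _ _ => by omega⟩
    · have hcan := cnorm_canon' hne1 hne2 hb1 hb2 h
      exact Or.inr ⟨⟨hcan.1, hcan.2, by omega⟩, fun _ _ => by omega⟩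
  · -- backward map
    intro r hr; beta_reduce
    have hmem : |r.1| < r.2 ∧ r.2 ≤ (n : ℤ) := by
      rw [Finset.mem_coe, Finset.mem_union, Finset.mem_sdiff, Finset.mem_sdiff, mem_NSet, mem_NSet] at hr
      rcases hr with ⟨⟨h1, h2, _⟩, _⟩|⟨⟨h1, h2, _⟩, _⟩ <;> exact ⟨h1, h2⟩
    have hA1 := le_abs_self r.1
    have hA2 := neg_abs_le r.1
    have hA0 := abs_nonneg r.1
    obtain ⟨ha, hb⟩ := hmem
    have hA3 : |r.2| = r.2 := abs_of_pos (by omega)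
    set A := u r.1 with hA
    set B := u r.2 with hB
    have hne1 : A ≠ B := perm_ne (by omega)
    have hne2 : A ≠ -B := by
      rw [hB, ← hu.1]
      exact perm_ne (by omega)
    have hb1 : |A| ≤ (n : ℤ) := sp_bound hu (by omega)
    have hb2 : |B| ≤ (n : ℤ) := sp_bound hu (by omega)
    have gA1 := le_abs_self A
    have gA2 := neg_abs_le A
    have gB1 := le_abs_self B
    have gB2 := neg_abs_le B
    have haneg : |(-A)| = |A| := abs_neg A
    have hbneg : |(-B)| = |B| := abs_neg B
    have huA : u⁻¹ A = r.1 := u.inv_apply_self r.1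
    have huB : u⁻¹ B = r.2 := u.inv_apply_self r.2
    have hiA : u⁻¹ (-A) = -r.1 := by rw [(sp_inv hu).1, huA]
    have hiB : u⁻¹ (-B) = -r.2 := by rw [(sp_inv hu).1, huB]
    have hvnA : v (-r.1) = - v r.1 := hv.1 r.1
    have hvnB : v (-r.2) = - v r.2 := hv.1 r.2
    have hvne : v r.1 ≠ v r.2 := perm_ne (by omega)
    rw [Finset.mem_coe, Finset.mem_union, Finset.mem_sdiff, Finset.mem_sdiff, mem_NSet, mem_NSet] at hr
    rcases hr with ⟨⟨_, _, hv'⟩, hnu⟩|⟨⟨_, _, hu'⟩, hnv⟩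
    · have hnu' : ¬ u r.2 < u r.1 := fun hcon => hnu ⟨ha, hb, hcon⟩
      rcases cnorm_cases A B with h|h|h|h <;> rw [h] <;> rw [Finset.mem_coe, mem_NSet'] <;>
        have hcan := cnorm_canon' hne1 hne2 hb1 hb2 h
      · refine ⟨hcan.1, hcan.2, ?_⟩
        simp only [Equiv.Perm.mul_apply, huA, huB]
        exact hv'
      · refine ⟨hcan.1, hcan.2, ?_⟩
        simp only [Equiv.Perm.mul_apply, hiA, hiB, hvnA, hvnB]
        omega
      · exfalso; omega
      · exfalso; omega
    · have hnv' : ¬ v r.2 < v r.1 := fun hcon => hnv ⟨ha, hb, hcon⟩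
      rcases cnorm_cases A B with h|h|h|h <;> rw [h] <;> rw [Finset.mem_coe, mem_NSet'] <;>
        have hcan := cnorm_canon' hne1 hne2 hb1 hb2 h
      · exfalso; omega
      · exfalso; omega
      · refine ⟨hcan.1, hcan.2, ?_⟩
        simp only [Equiv.Perm.mul_apply, huA, huB]
        omega
      · refine ⟨hcan.1, hcan.2, ?_⟩
        simp only [Equiv.Perm.mul_apply, hiA, hiB, hvnA, hvnB]
        omega
  · -- left inverse
    intro r hr; beta_reduce
    rw [Finset.mem_coe, mem_NSet] at hr
    obtain ⟨ha, hb, _⟩ := hr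
    have huA : u (u⁻¹ r.1) = r.1 := u.apply_inv_self r.1
    have huB : u (u⁻¹ r.2) = r.2 := u.apply_inv_self r.2
    have hunA : u (-(u⁻¹ r.1)) = -r.1 := by rw [hu.1, huA]
    have hunB : u (-(u⁻¹ r.2)) = -r.2 := by rw [hu.1, huB]
    rcases cnorm_cases (u⁻¹ r.1) (u⁻¹ r.2) with h|h|h|h <;> rw [h]
    · simp only [huA, huB]; rw [cnorm_id1 ha]
    · simp only [hunA, hunB]; rw [cnorm_id2 ha]
    · simp only [huA, huB]; rw [cnorm_id3 ha]
    · simp only [hunA, hunB]; rw [cnorm_id4 ha]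
  · -- right inverse
    intro r hr; beta_reduce
    have hmem : |r.1| < r.2 := by
      rw [Finset.mem_coe, Finset.mem_union, Finset.mem_sdiff, Finset.mem_sdiff, mem_NSet, mem_NSet] at hr
      rcases hr with ⟨⟨h1, _, _⟩, _⟩|⟨⟨h1, _, _⟩, _⟩ <;> exact h1
    have huA : u⁻¹ (u r.1) = r.1 := u.inv_apply_self r.1
    have huB : u⁻¹ (u r.2) = r.2 := u.inv_apply_self r.2
    have hunA : u⁻¹ (-(u r.1)) = -r.1 := by rw [(sp_inv hu).1, u.inv_apply_self]
    have hunB : u⁻¹ (-(u r.2)) = -r.2 := by rw [(sp_inv hu).1, u.inv_apply_self]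
    rcases cnorm_cases (u r.1) (u r.2) with h|h|h|h <;> rw [h]
    · simp only [huA, huB]; rw [cnorm_id1 hmem]
    · simp only [hunA, hunB]; rw [cnorm_id2 hmem]
    · simp only [huA, huB]; rw [cnorm_id3 hmem]
    · simp only [hunA, hunB]; rw [cnorm_id4 hmem]

/-- The weak order is containment of inversion sets. -/
theorem wle_iff {n : ℕ} {u v : Equiv.Perm ℤ} (hu : u ∈ SignedPerm n) (hv : v ∈ SignedPerm n) :
    wle n u v ↔ NSet n u ⊆ NSet n v := by
  unfold wle
  rw [blen_eq hu, blen_eq hv, len_sub hu hv]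
  have h1 : (NSet n v).card = (NSet n v \ NSet n u).card + (NSet n v ∩ NSet n u).card :=
    (Finset.card_sdiff_add_card_inter _ _).symm
  have h2 : (NSet n u).card = (NSet n u \ NSet n v).card + (NSet n u ∩ NSet n v).card :=
    (Finset.card_sdiff_add_card_inter _ _).symm
  have h3 : (NSet n v ∩ NSet n u) = (NSet n u ∩ NSet n v) := Finset.inter_comm _ _
  rw [h3] at h1
  have h5 : NSet n u ⊆ NSet n v → (NSet n u ∩ NSet n v) = NSet n u := fun h => Finset.inter_eq_left.mpr h
  constructor
  · intro h
    have h4 : (NSet n u \ NSet n v).card = 0 := by omega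
    rw [Finset.card_eq_zero, Finset.sdiff_eq_empty_iff_subset] at h4
    exact h4
  · intro h
    have h4 : (NSet n u \ NSet n v) = ∅ := Finset.sdiff_eq_empty_iff_subset.mpr h
    rw [h5 h] at h1
    rw [h4]
    simp only [Finset.card_empty]
    omega

end TauAux
namespace TauAux

theorem shiftFun_odd (p : ℕ) (b : ℤ) : shiftFun p (-b) = - shiftFun p b := by
  unfold shiftFun; split_ifs <;> omega

theorem shiftFun_lt {p : ℕ} {a b : ℤ} (ha : a ≠ 0) (hb : b ≠ 0) :
    shiftFun p a < shiftFun p b ↔ a < b := by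
  unfold shiftFun; split_ifs <;> omega

theorem shiftFun_pos {p : ℕ} {a : ℤ} : 0 < shiftFun p a ↔ 0 < a := by
  unfold shiftFun; split_ifs <;> omega

theorem shiftFun_neg' {p : ℕ} {a : ℤ} : shiftFun p a < 0 ↔ a < 0 := by
  unfold shiftFun; split_ifs <;> omega

theorem shiftFun_abs {p : ℕ} {a : ℤ} (h : a ≠ 0) : |shiftFun p a| = |a| + p := by
  rcases lt_trichotomy a 0 with ha|ha|ha
  · have h2 : shiftFun p a = a - p := by unfold shiftFun; split_ifs <;> omega
    rw [h2, abs_of_neg (by omega), abs_of_neg ha]; ring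
  · exact absurd ha h
  · have h2 : shiftFun p a = a + p := by unfold shiftFun; split_ifs <;> omega
    rw [h2, abs_of_pos (by omega), abs_of_pos ha]

/-- unshift: inverse of `shiftFun p` on `{b : p < |b|}`. -/
def ush (p : ℕ) (r : ℤ) : ℤ := if 0 < r then r - p else r + p

theorem ush_shiftFun {p : ℕ} {r : ℤ} (h : r ≠ 0) : ush p (shiftFun p r) = r := by
  unfold ush shiftFun; split_ifs <;> omega

theorem shiftFun_ush {p : ℕ} {b : ℤ} (h : (p : ℤ) < |b|) : shiftFun p (ush p b) = b := by
  rcases abs_choice b with e|e <;> unfold ush shiftFun <;> split_ifs <;> omega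

theorem ush_odd {p : ℕ} {b : ℤ} (h : (p : ℤ) < |b|) : ush p (-b) = - ush p b := by
  rcases abs_choice b with e|e <;> unfold ush <;> split_ifs <;> omega

theorem ush_abs {p : ℕ} {b : ℤ} (h : (p : ℤ) < |b|) : |ush p b| = |b| - p := by
  rcases lt_trichotomy b 0 with hb|hb|hb
  · rw [abs_of_neg hb] at h ⊢
    have h2 : ush p b = b + p := by unfold ush; split_ifs <;> omega
    rw [h2, abs_of_neg (by omega)]; ring
  · subst hb; simp at h; omega
  · rw [abs_of_pos hb] at h ⊢
    have h2 : ush p b = b - p := by unfold ush; split_ifs <;> omega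
    rw [h2, abs_of_pos (by omega)]

theorem ush_pos {p : ℕ} {b : ℤ} (h : (p : ℤ) < |b|) : (0 < ush p b ↔ 0 < b) := by
  rcases abs_choice b with e|e <;> unfold ush <;> split_ifs <;> omega

/-- If an injective permutation maps a finite set into itself, so does its inverse. -/
theorem perm_inv_mem {w : Equiv.Perm ℤ} {S : Finset ℤ} (h : ∀ i ∈ S, w i ∈ S) :
    ∀ i ∈ S, w⁻¹ i ∈ S := by
  classical
  have himg : S.image w = S := by
    apply Finset.eq_of_subset_of_card_le
    · intro j hj
      rcases Finset.mem_image.mp hj with ⟨i, hi, rfl⟩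
      exact h i hi
    · exact le_of_eq (Finset.card_image_of_injective _ w.injective).symm
  intro i hi
  rw [← himg] at hi
  rcases Finset.mem_image.mp hi with ⟨j, hj, hji⟩
  have hj' : w⁻¹ i = j := by rw [← hji]; exact w.inv_apply_self j
  rw [hj']; exact hj

section Shuffle

variable {p q : ℕ} {ξ : Equiv.Perm ℤ} (hξ : IsShuffle p q ξ)

theorem sh_pos (hξ : IsShuffle p q ξ) {i : ℤ} (h1 : 1 ≤ i) (h2 : i ≤ (p : ℤ) + q) :
    0 < ξ i := hξ.2.1 i h1 h2

theorem sh_sp (hξ : IsShuffle p q ξ) : ξ ∈ SignedPerm (p + q) := hξ.1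

theorem sh_cast {p q : ℕ} : ((p + q : ℕ) : ℤ) = (p : ℤ) + q := by push_cast; ring

theorem sh_inv_pos (hξ : IsShuffle p q ξ) {i : ℤ} (h1 : 1 ≤ i) (h2 : i ≤ (p : ℤ) + q) :
    1 ≤ ξ⁻¹ i ∧ ξ⁻¹ i ≤ (p : ℤ) + q := by
  have hb : |ξ⁻¹ i| ≤ (p : ℤ) + q := by
    rw [← sh_cast]
    apply sp_bound (sp_inv hξ.1)
    rw [sh_cast]
    rcases abs_choice i with e|e <;> omega
  have h00 := abs_nonneg (ξ⁻¹ i)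
  have h0 : ξ⁻¹ i ≠ 0 := by
    intro hc
    have : ξ (ξ⁻¹ i) = i := ξ.apply_inv_self i
    rw [hc, sp_zero hξ.1] at this
    omega
  have hpos : 0 < ξ⁻¹ i := by
    by_contra hc
    push_neg at hc
    have hneg : ξ⁻¹ i < 0 := by omega
    have h3 : 0 < ξ (-(ξ⁻¹ i)) := by
      apply sh_pos hξ <;> rcases abs_choice (ξ⁻¹ i) with e|e <;> omega
    rw [hξ.1.1, ξ.apply_inv_self] at h3
    omega
  rcases abs_choice (ξ⁻¹ i) with e|e <;> constructor <;> omega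

theorem sh_orient (hξ : IsShuffle p q ξ) {s t : ℤ} (h1 : |s| < t) (h2 : t ≤ (p : ℤ) + q)
    (h3 : s ≤ 0 ∨ t ≤ (p : ℤ) ∨ (p : ℤ) < s) : ξ s < ξ t := by
  have hs1 := le_abs_self s
  have hs2 := neg_abs_le s
  have hs0 := abs_nonneg s
  have ht : 0 < ξ t := sh_pos hξ (by omega) h2
  rcases le_or_gt s 0 with hs|hs
  · rcases eq_or_lt_of_le hs with rfl|hneg
    · rw [sp_zero hξ.1]; exact ht
    · have h4 : 0 < ξ (-s) := sh_pos hξ (by omega) (by omega)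
      rw [← neg_neg s, hξ.1.1]
      omega
  · rcases h3 with h|h|h
    · omega
    · exact hξ.2.2.1 s t hs (by omega) h
    · exact hξ.2.2.2 s t h (by omega) h2

end Shuffle

end TauAux
namespace TauAux

theorem spq_bound {p q : ℕ} {w : Equiv.Perm ℤ} (hw : w ∈ SignedPerm (p + q)) {i : ℤ}
    (hi : |i| ≤ (p : ℤ) + q) : |w i| ≤ (p : ℤ) + q := by
  have h := sp_bound hw (i := i) (by rw [sh_cast]; exact hi)
  rwa [sh_cast] at h

theorem ush_neg {p : ℕ} {b : ℤ} (h : (p : ℤ) < |b|) : ush p b < 0 ↔ b < 0 := by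
  have h3 := abs_nonneg b
  rcases abs_choice b with e|e <;> unfold ush <;> split_ifs <;>
    constructor <;> intro hx <;> omega

/-- Pointwise characterization of membership in `SProdComp p q K`. -/
def CChar (p q : ℕ) (K : Finset ℤ) (w : Equiv.Perm ℤ) : Prop :=
  w ∈ SignedPerm (p + q) ∧
  (∀ a : ℤ, 1 ≤ a → a ≤ (p : ℤ) → |w a| ≤ (p : ℤ)) ∧
  (∀ a : ℤ, (p : ℤ) < a → a ≤ (p : ℤ) + q →
    ((p : ℤ) < w a ∧ a - p ∉ K) ∨ (w a < -(p : ℤ) ∧ a - p ∈ K))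

theorem cc_small {p q : ℕ} {K : Finset ℤ} {w : Equiv.Perm ℤ} (h : CChar p q K w) {a : ℤ}
    (ha : |a| ≤ (p : ℤ)) : |w a| ≤ (p : ℤ) := by
  rcases lt_trichotomy a 0 with h'|h'|h'
  · rw [abs_of_neg h'] at ha
    have h2 := h.2.1 (-a) (by omega) (by omega)
    rw [h.1.1 a, abs_neg] at h2
    exact h2
  · subst h'
    rw [sp_zero h.1]
    simpa using Int.natCast_nonneg p
  · rw [abs_of_pos h'] at ha
    exact h.2.1 a (by omega) ha

theorem cc_big {p q : ℕ} {K : Finset ℤ} {w : Equiv.Perm ℤ} (h : CChar p q K w) {a : ℤ}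
    (h1 : (p : ℤ) < a) (h2 : a ≤ (p : ℤ) + q) :
    (p : ℤ) < |w a| ∧ (w a < 0 ↔ a - p ∈ K) := by
  rcases h.2.2 a h1 h2 with ⟨h3, h4⟩|⟨h3, h4⟩
  · rw [abs_of_pos (by omega)]
    exact ⟨h3, by constructor <;> intro hc <;> [omega; exact absurd hc h4]⟩
  · rw [abs_of_neg (by omega)]
    exact ⟨by omega, by constructor <;> intro _ <;> [exact h4; omega]⟩

/-- Mixed-root comparison: small value vs big position is determined by `K`. -/
theorem cc_mix {p q : ℕ} {K : Finset ℤ} {w : Equiv.Perm ℤ} (h : CChar p q K w) {y b : ℤ}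
    (hy : |y| ≤ (p : ℤ)) (h1 : (p : ℤ) < b) (h2 : b ≤ (p : ℤ) + q) :
    w b < y ↔ b - p ∈ K := by
  have hy1 := le_abs_self y
  have hy2 := neg_abs_le y
  rcases h.2.2 b h1 h2 with ⟨h3, h4⟩|⟨h3, h4⟩
  · exact ⟨fun hc => by omega, fun hc => absurd hc h4⟩
  · exact ⟨fun _ => h4, fun _ => by omega⟩

theorem cc_mix' {p q : ℕ} {K : Finset ℤ} {w : Equiv.Perm ℤ} (h : CChar p q K w) {y b : ℤ}
    (hy : |y| ≤ (p : ℤ)) (h1 : (p : ℤ) < b) (h2 : b ≤ (p : ℤ) + q) :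
    y < w b ↔ b - p ∉ K := by
  have hy1 := le_abs_self y
  have hy2 := neg_abs_le y
  rcases h.2.2 b h1 h2 with ⟨h3, h4⟩|⟨h3, h4⟩
  · exact ⟨fun _ => h4, fun _ => by omega⟩
  · exact ⟨fun hc => by omega, fun hc => absurd h4 hc⟩

/-- Big positions have big values (both signs). -/
theorem cc_bigabs {p q : ℕ} {K : Finset ℤ} {w : Equiv.Perm ℤ} (h : CChar p q K w) {a : ℤ}
    (h1 : (p : ℤ) < |a|) (h2 : |a| ≤ (p : ℤ) + q) : (p : ℤ) < |w a| := by
  rcases lt_trichotomy a 0 with h'|h'|h'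
  · rw [abs_of_neg h'] at h1 h2
    have h3 := (cc_big h (a := -a) (by omega) (by omega)).1
    rw [h.1.1 a, abs_neg] at h3
    exact h3
  · subst h'; simp at h1; omega
  · rw [abs_of_pos h'] at h1 h2
    exact (cc_big h h1 h2).1

/-- Restriction of `w` to `{|i| ≤ p}` (extended by the identity). -/
noncomputable def restrictPerm (p : ℕ) (w : Equiv.Perm ℤ)
    (hmap : ∀ i : ℤ, |i| ≤ (p : ℤ) → |w i| ≤ (p : ℤ))
    (hmapinv : ∀ i : ℤ, |i| ≤ (p : ℤ) → |w⁻¹ i| ≤ (p : ℤ)) : Equiv.Perm ℤ where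
  toFun i := if |i| ≤ (p : ℤ) then w i else i
  invFun i := if |i| ≤ (p : ℤ) then w⁻¹ i else i
  left_inv i := by
    by_cases hc : |i| ≤ (p : ℤ)
    · simp only [if_pos hc, if_pos (hmap i hc), Equiv.Perm.inv_apply_self]
    · simp only [if_neg hc]
  right_inv i := by
    by_cases hc : |i| ≤ (p : ℤ)
    · simp only [if_pos hc, if_pos (hmapinv i hc), Equiv.Perm.apply_inv_self]
    · simp only [if_neg hc]

theorem restrictPerm_apply {p : ℕ} {w : Equiv.Perm ℤ} {hmap hmapinv} (i : ℤ) :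
    restrictPerm p w hmap hmapinv i = if |i| ≤ (p : ℤ) then w i else i := rfl

/-- The middle block of `w`, shifted down to `𝔅_q`. -/
noncomputable def midPerm (p q : ℕ) (w : Equiv.Perm ℤ)
    (hmap : ∀ i : ℤ, 1 ≤ |i| → |i| ≤ (q : ℤ) →
      (p : ℤ) < |w (shiftFun p i)| ∧ |w (shiftFun p i)| ≤ (p : ℤ) + q)
    (hmapinv : ∀ i : ℤ, 1 ≤ |i| → |i| ≤ (q : ℤ) →
      (p : ℤ) < |w⁻¹ (shiftFun p i)| ∧ |w⁻¹ (shiftFun p i)| ≤ (p : ℤ) + q) : Equiv.Perm ℤ where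
  toFun i := if 1 ≤ |i| ∧ |i| ≤ (q : ℤ) then ush p (w (shiftFun p i)) else i
  invFun i := if 1 ≤ |i| ∧ |i| ≤ (q : ℤ) then ush p (w⁻¹ (shiftFun p i)) else i
  left_inv i := by
    by_cases hc : 1 ≤ |i| ∧ |i| ≤ (q : ℤ)
    · obtain ⟨hb1, hb2⟩ := hmap i hc.1 hc.2
      have habs : |ush p (w (shiftFun p i))| = |w (shiftFun p i)| - p := ush_abs hb1
      have hc2 : 1 ≤ |ush p (w (shiftFun p i))| ∧ |ush p (w (shiftFun p i))| ≤ (q : ℤ) := by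
        constructor <;> omega
      have hi0 : i ≠ 0 := by intro hc0; rw [hc0] at hc; simp at hc
      simp only [if_pos hc, if_pos hc2, shiftFun_ush hb1, Equiv.Perm.inv_apply_self,
        ush_shiftFun hi0]
    · simp only [if_neg hc]
  right_inv i := by
    by_cases hc : 1 ≤ |i| ∧ |i| ≤ (q : ℤ)
    · obtain ⟨hb1, hb2⟩ := hmapinv i hc.1 hc.2
      have habs : |ush p (w⁻¹ (shiftFun p i))| = |w⁻¹ (shiftFun p i)| - p := ush_abs hb1
      have hc2 : 1 ≤ |ush p (w⁻¹ (shiftFun p i))| ∧ |ush p (w⁻¹ (shiftFun p i))| ≤ (q : ℤ) := by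
        constructor <;> omega
      have hi0 : i ≠ 0 := by intro hc0; rw [hc0] at hc; simp at hc
      simp only [if_pos hc, if_pos hc2, shiftFun_ush hb1, Equiv.Perm.apply_inv_self,
        ush_shiftFun hi0]
    · simp only [if_neg hc]

theorem midPerm_apply {p q : ℕ} {w : Equiv.Perm ℤ} {hmap hmapinv} (i : ℤ) :
    midPerm p q w hmap hmapinv i =
      if 1 ≤ |i| ∧ |i| ≤ (q : ℤ) then ush p (w (shiftFun p i)) else i := rfl

/-- The shifted product `u × v` as a permutation. -/
noncomputable def sprodPerm (p q : ℕ) (u v : Equiv.Perm ℤ) (hu : u ∈ SignedPerm p)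
    (hv : v ∈ SignedPerm q) : Equiv.Perm ℤ where
  toFun i := if |i| ≤ (p : ℤ) then u i
    else if |i| ≤ (p : ℤ) + q then shiftFun p (v (ush p i)) else i
  invFun i := if |i| ≤ (p : ℤ) then u⁻¹ i
    else if |i| ≤ (p : ℤ) + q then shiftFun p (v⁻¹ (ush p i)) else i
  left_inv i := by
    have hq0 : (0 : ℤ) ≤ q := Int.natCast_nonneg q
    by_cases hc : |i| ≤ (p : ℤ)
    · simp only [if_pos hc, if_pos (sp_bound hu hc), Equiv.Perm.inv_apply_self]
    · by_cases hc2 : |i| ≤ (p : ℤ) + q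
      · push_neg at hc
        have h1 : |ush p i| = |i| - p := ush_abs hc
        have h2 : ush p i ≠ 0 := by
          intro h0; rw [h0] at h1; simp at h1; omega
        have h3 : v (ush p i) ≠ 0 := by rw [Ne, sp_eq_zero hv]; exact h2
        have h4 : |v (ush p i)| ≤ (q : ℤ) := sp_bound hv (by omega)
        have h5 : |shiftFun p (v (ush p i))| = |v (ush p i)| + p := shiftFun_abs h3
        have h6 := abs_pos.mpr h3
        have hx1 : ¬ |shiftFun p (v (ush p i))| ≤ (p : ℤ) := by omega
        have hx2 : |shiftFun p (v (ush p i))| ≤ (p : ℤ) + q := by omega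
        simp only [if_neg (show ¬ |i| ≤ (p : ℤ) by omega), if_pos hc2, if_neg hx1,
          if_pos hx2, ush_shiftFun h3, Equiv.Perm.inv_apply_self, shiftFun_ush hc]
      · simp only [if_neg hc, if_neg hc2]
  right_inv i := by
    have hq0 : (0 : ℤ) ≤ q := Int.natCast_nonneg q
    by_cases hc : |i| ≤ (p : ℤ)
    · simp only [if_pos hc, if_pos (sp_bound (sp_inv hu) hc), Equiv.Perm.apply_inv_self]
    · by_cases hc2 : |i| ≤ (p : ℤ) + q
      · push_neg at hc
        have h1 : |ush p i| = |i| - p := ush_abs hc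
        have h2 : ush p i ≠ 0 := by
          intro h0; rw [h0] at h1; simp at h1; omega
        have h3 : v⁻¹ (ush p i) ≠ 0 := by rw [Ne, sp_eq_zero (sp_inv hv)]; exact h2
        have h4 : |v⁻¹ (ush p i)| ≤ (q : ℤ) := sp_bound (sp_inv hv) (by omega)
        have h5 : |shiftFun p (v⁻¹ (ush p i))| = |v⁻¹ (ush p i)| + p := shiftFun_abs h3
        have h6 := abs_pos.mpr h3
        have hx1 : ¬ |shiftFun p (v⁻¹ (ush p i))| ≤ (p : ℤ) := by omega
        have hx2 : |shiftFun p (v⁻¹ (ush p i))| ≤ (p : ℤ) + q := by omega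
        simp only [if_neg (show ¬ |i| ≤ (p : ℤ) by omega), if_pos hc2, if_neg hx1,
          if_pos hx2, ush_shiftFun h3, Equiv.Perm.apply_inv_self, shiftFun_ush hc]
      · simp only [if_neg hc, if_neg hc2]

theorem sprodPerm_apply {p q : ℕ} {u v : Equiv.Perm ℤ} {hu hv} (i : ℤ) :
    sprodPerm p q u v hu hv i = if |i| ≤ (p : ℤ) then u i
      else if |i| ≤ (p : ℤ) + q then shiftFun p (v (ush p i)) else i := rfl

theorem sprodPerm_spec {p q : ℕ} {u v : Equiv.Perm ℤ} (hu : u ∈ SignedPerm p)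
    (hv : v ∈ SignedPerm q) : IsSProd p q u v (sprodPerm p q u v hu hv) := by
  have hq0 : (0 : ℤ) ≤ q := Int.natCast_nonneg q
  have hsp : sprodPerm p q u v hu hv ∈ SignedPerm (p + q) := by
    constructor
    · intro i
      rw [sprodPerm_apply, sprodPerm_apply, abs_neg]
      by_cases h1 : |i| ≤ (p : ℤ)
      · rw [if_pos h1, if_pos h1, hu.1]
      · rw [if_neg h1, if_neg h1]
        by_cases h2 : |i| ≤ (p : ℤ) + q
        · push_neg at h1
          rw [if_pos h2, if_pos h2, ush_odd h1, hv.1, shiftFun_odd]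
        · rw [if_neg h2, if_neg h2]
    · intro i hi
      rw [sh_cast] at hi
      have h0 := abs_nonneg i
      rw [sprodPerm_apply, if_neg (by omega), if_neg (by omega)]
  refine ⟨hsp, ?_, ?_⟩
  · intro a h1 h2
    rw [sprodPerm_apply, if_pos (by rw [abs_of_pos (by omega)]; omega)]
  · intro a h1 h2
    have habs : |a| = a := abs_of_pos (by omega)
    rw [sprodPerm_apply, if_neg (by omega), if_pos (by omega)]
    have husha : ush p a = a - p := by unfold ush; split_ifs <;> omega
    rw [husha]

theorem comp_char {p q : ℕ} {K : Finset ℤ} (hK : K ⊆ Finset.Icc (1 : ℤ) (q : ℤ))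
    {w : Equiv.Perm ℤ} : w ∈ SProdComp p q K ↔ CChar p q K w := by
  have hq0 : (0 : ℤ) ≤ q := Int.natCast_nonneg q
  constructor
  · rintro ⟨u, v, hu, hv, hNega, hsp⟩
    refine ⟨hsp.1, ?_, ?_⟩
    · intro a h1 h2
      rw [hsp.2.1 a h1 h2]
      exact sp_bound hu (by rw [abs_of_pos (by omega)]; omega)
    · intro a h1 h2
      rw [hsp.2.2 a h1 h2]
      have hne : v (a - p) ≠ 0 := by rw [Ne, sp_eq_zero hv]; omega
      have hmem : a - p ∈ K ↔ v (a - p) < 0 := by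
        conv_lhs => rw [← hNega]
        unfold NegaSet
        rw [Finset.mem_filter, Finset.mem_Icc]
        exact ⟨fun h => h.2, fun h => ⟨⟨by omega, by omega⟩, h⟩⟩
      rcases lt_trichotomy (v (a - p)) 0 with h|h|h
      · right
        have h2' : shiftFun p (v (a - p)) = v (a - p) - p := by
          unfold shiftFun; split_ifs <;> omega
        exact ⟨by omega, hmem.mpr h⟩
      · exact absurd h hne
      · left
        have h2' : shiftFun p (v (a - p)) = v (a - p) + p := by
          unfold shiftFun; split_ifs <;> omega
        refine ⟨by omega, fun hc => ?_⟩
        rw [hmem] at hc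
        omega
  · intro h
    obtain ⟨hsp, hsmall, hbig⟩ := h
    have hcc : CChar p q K w := ⟨hsp, hsmall, hbig⟩
    have key : ∀ i : ℤ, |i| ≤ (p : ℤ) → |w i| ≤ (p : ℤ) := fun i hi => cc_small hcc hi
    have keyinv : ∀ i : ℤ, |i| ≤ (p : ℤ) → |w⁻¹ i| ≤ (p : ℤ) := by
      have h2 := perm_inv_mem (w := w) (S := Finset.Icc (-(p : ℤ)) p)
        (fun i hi => by
          rw [Finset.mem_Icc] at hi ⊢
          exact abs_le.mp (key i (abs_le.mpr hi)))
      intro i hi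
      have h3 := h2 i (Finset.mem_Icc.mpr (abs_le.mp hi))
      rw [Finset.mem_Icc] at h3
      exact abs_le.mpr h3
    have keyb : ∀ i : ℤ, (p : ℤ) < |i| → |i| ≤ (p : ℤ) + q →
        ((p : ℤ) < |w i| ∧ |w i| ≤ (p : ℤ) + q) :=
      fun i h1 h2 => ⟨cc_bigabs hcc h1 h2, spq_bound hsp (by omega)⟩
    have keybinv : ∀ i : ℤ, (p : ℤ) < |i| → |i| ≤ (p : ℤ) + q →
        ((p : ℤ) < |w⁻¹ i| ∧ |w⁻¹ i| ≤ (p : ℤ) + q) := by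
      have h2 := perm_inv_mem (w := w)
        (S := (Finset.Icc (-(p : ℤ) - q) ((p : ℤ) + q)).filter (fun i => (p : ℤ) < |i|))
        (fun i hi => by
          rw [Finset.mem_filter, Finset.mem_Icc] at hi ⊢
          obtain ⟨⟨hi1, hi2⟩, hi3⟩ := hi
          have h3 := keyb i hi3 (abs_le.mpr (by omega))
          have h4 := abs_le.mp h3.2
          exact ⟨⟨by omega, by omega⟩, h3.1⟩)
      intro i h1 h2'
      have h4 := abs_le.mp h2'
      have h3 := h2 i (by
        rw [Finset.mem_filter, Finset.mem_Icc]
        exact ⟨⟨by omega, by omega⟩, h1⟩)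
      rw [Finset.mem_filter, Finset.mem_Icc] at h3
      exact ⟨h3.2, abs_le.mpr (by omega)⟩
    have hshabs : ∀ i : ℤ, 1 ≤ |i| → |shiftFun p i| = |i| + p := by
      intro i h1
      exact shiftFun_abs (by intro h0; rw [h0] at h1; simp at h1)
    have hmap : ∀ i : ℤ, 1 ≤ |i| → |i| ≤ (q : ℤ) →
        ((p : ℤ) < |w (shiftFun p i)| ∧ |w (shiftFun p i)| ≤ (p : ℤ) + q) := by
      intro i h1 h2
      have h3 := hshabs i h1
      exact keyb _ (by omega) (by omega)
    have hmapinv : ∀ i : ℤ, 1 ≤ |i| → |i| ≤ (q : ℤ) →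
        ((p : ℤ) < |w⁻¹ (shiftFun p i)| ∧ |w⁻¹ (shiftFun p i)| ≤ (p : ℤ) + q) := by
      intro i h1 h2
      have h3 := hshabs i h1
      exact keybinv _ (by omega) (by omega)
    refine ⟨restrictPerm p w key keyinv, midPerm p q w hmap hmapinv, ?_, ?_, ?_, ?_⟩
    · constructor
      · intro i
        rw [restrictPerm_apply, restrictPerm_apply, abs_neg]
        by_cases hc : |i| ≤ (p : ℤ)
        · rw [if_pos hc, if_pos hc, hsp.1]
        · rw [if_neg hc, if_neg hc]
      · intro i hi
        rw [restrictPerm_apply, if_neg (by omega)]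
    · constructor
      · intro i
        rw [midPerm_apply, midPerm_apply, abs_neg]
        by_cases hc : 1 ≤ |i| ∧ |i| ≤ (q : ℤ)
        · rw [if_pos hc, if_pos hc, shiftFun_odd, hsp.1, ush_odd (hmap i hc.1 hc.2).1]
        · rw [if_neg hc, if_neg hc]
      · intro i hi
        have h0 := abs_nonneg i
        rw [midPerm_apply, if_neg (by rintro ⟨_, hc2⟩; omega)]
    · ext i
      unfold NegaSet
      rw [Finset.mem_filter, Finset.mem_Icc]
      constructor
      · rintro ⟨⟨h1, h2⟩, h3⟩
        rw [midPerm_apply, if_pos (by rw [abs_of_pos (by omega)]; exact ⟨by omega, h2⟩)] at h3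
        have hsh : shiftFun p i = i + p := by unfold shiftFun; split_ifs <;> omega
        rw [hsh] at h3
        have h4 := cc_big hcc (a := i + p) (by omega) (by omega)
        rw [ush_neg h4.1] at h3
        have h5 := h4.2.mp h3
        have h6 : i + (p : ℤ) - p = i := by ring
        rwa [h6] at h5
      · intro hi
        have hIcc := Finset.mem_Icc.mp (hK hi)
        refine ⟨hIcc, ?_⟩
        rw [midPerm_apply, if_pos (by rw [abs_of_pos (by omega)]; exact ⟨by omega, hIcc.2⟩)]
        have hsh : shiftFun p i = i + p := by unfold shiftFun; split_ifs <;> omega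
        rw [hsh]
        have h4 := cc_big hcc (a := i + p) (by omega) (by omega)
        rw [ush_neg h4.1]
        apply h4.2.mpr
        have h6 : i + (p : ℤ) - p = i := by ring
        rwa [h6]
    · refine ⟨hsp, ?_, ?_⟩
      · intro a h1 h2
        rw [restrictPerm_apply, if_pos (by rw [abs_of_pos (by omega)]; omega)]
      · intro a h1 h2
        rw [midPerm_apply,
          if_pos (by rw [abs_of_pos (by omega)]; exact ⟨by omega, by omega⟩)]
        have hsh : shiftFun p (a - p) = a := by unfold shiftFun; split_ifs <;> omega
        rw [hsh, shiftFun_ush (cc_bigabs hcc (by rw [abs_of_pos (by omega)]; omega)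
          (by rw [abs_of_pos (by omega)]; omega))]

end TauAux
namespace TauAux

section Main

variable {p q : ℕ} {ξ : Equiv.Perm ℤ} {K : Finset ℤ}

theorem xi_inv_apply_facts (hξ : IsShuffle p q ξ) {r : ℤ} (h1 : 1 ≤ r) (h2 : r ≤ (p : ℤ) + q) :
    1 ≤ ξ⁻¹ r ∧ ξ⁻¹ r ≤ (p : ℤ) + q := sh_inv_pos hξ h1 h2

/-- Statement: for `a, b` in the component, `a ≤ b` iff `aξ⁻¹ ≤ bξ⁻¹`. -/
theorem P2 (hξ : IsShuffle p q ξ) {a b : Equiv.Perm ℤ} (ha : CChar p q K a)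
    (hb : CChar p q K b) :
    NSet (p + q) a ⊆ NSet (p + q) b ↔
      NSet (p + q) (a * ξ⁻¹) ⊆ NSet (p + q) (b * ξ⁻¹) := by
  have hq0 : (0 : ℤ) ≤ q := Int.natCast_nonneg q
  have hξi := sp_inv hξ.1
  constructor
  · intro hsub r hr
    rw [mem_NSet] at hr
    obtain ⟨h1, h2, h3⟩ := hr
    rw [sh_cast] at h2
    have hA1 := le_abs_self r.1
    have hA2 := neg_abs_le r.1
    have hA0 := abs_nonneg r.1
    have hA3 : |r.2| = r.2 := abs_of_pos (by omega)
    have h3' : a (ξ⁻¹ r.2) < a (ξ⁻¹ r.1) := by simpa [Equiv.Perm.mul_apply] using h3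
    have hst : ξ⁻¹ r.1 ≠ ξ⁻¹ r.2 := perm_ne (by omega)
    have hst' : ξ⁻¹ r.1 ≠ -(ξ⁻¹ r.2) := by
      rw [← hξi.1 r.2]
      exact perm_ne (by omega)
    have hs : |ξ⁻¹ r.1| ≤ (p : ℤ) + q := by
      have := sp_bound hξi (i := r.1) (by rw [sh_cast]; omega); rwa [sh_cast] at this
    have ht : |ξ⁻¹ r.2| ≤ (p : ℤ) + q := by
      have := sp_bound hξi (i := r.2) (by rw [sh_cast]; omega); rwa [sh_cast] at this
    obtain ⟨i', j', hcan1, hcan2, hor⟩ := canon hst hst' hs ht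
    have hbg : b (ξ⁻¹ r.2) < b (ξ⁻¹ r.1) → r ∈ NSet (p + q) (b * ξ⁻¹) := by
      intro hbb
      rw [mem_NSet]
      exact ⟨h1, by rw [sh_cast]; omega, by simpa [Equiv.Perm.mul_apply] using hbb⟩
    rcases hor with hL|hR
    · have hmemA : (i', j') ∈ NSet (p + q) a := by
        rw [mem_NSet']
        exact ⟨hcan1, by rw [sh_cast]; omega, (hL a ha.1.1).mpr h3'⟩
      have hmemB := hsub hmemA
      rw [mem_NSet'] at hmemB
      exact hbg ((hL b hb.1.1).mp hmemB.2.2)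
    · -- flipped orientation: the root is mixed, values are determined by K
      have h1R := hR 1 (by intro r'; simp)
      simp only [Equiv.Perm.one_apply] at h1R
      have hξR := hR ξ hξ.1.1
      rw [ξ.apply_inv_self, ξ.apply_inv_self] at hξR
      have hji : ξ j' < ξ i' := hξR.mpr (by omega)
      have hmix : 0 < i' ∧ i' ≤ (p : ℤ) ∧ (p : ℤ) < j' := by
        by_contra hcon
        push_neg at hcon
        have : i' ≤ 0 ∨ j' ≤ (p : ℤ) ∨ (p : ℤ) < i' := by
          rcases le_or_gt i' 0 with h'|h'
          · exact Or.inl h'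
          · rcases le_or_gt j' (p : ℤ) with h''|h''
            · exact Or.inr (Or.inl h'')
            · exact Or.inr (Or.inr (by have := hcon h' ; omega))
        exact absurd (sh_orient hξ hcan1 hcan2 this) (by omega)
      have haR := hR a ha.1.1
      have haneq : a (ξ⁻¹ r.1) ≠ a (ξ⁻¹ r.2) := perm_ne hst
      have hnotaij : ¬ a j' < a i' := by
        rw [haR]; omega
      have hyabs : |a i'| ≤ (p : ℤ) := cc_small ha (by rw [abs_of_pos hmix.1]; exact hmix.2.1)
      have hybabs : |b i'| ≤ (p : ℤ) := cc_small hb (by rw [abs_of_pos hmix.1]; exact hmix.2.1)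
      have hK1 : j' - p ∉ K := by
        rw [← cc_mix ha hyabs hmix.2.2 hcan2]
        exact hnotaij
      have hnotbij : ¬ b j' < b i' := by
        rw [cc_mix hb hybabs hmix.2.2 hcan2]
        exact hK1
      have hbR := hR b hb.1.1
      rw [hbR] at hnotbij
      have hbneq : b (ξ⁻¹ r.1) ≠ b (ξ⁻¹ r.2) := perm_ne hst
      exact hbg (by omega)
  · intro hsub r hr
    rw [mem_NSet] at hr
    obtain ⟨h1, h2, h3⟩ := hr
    rw [sh_cast] at h2
    have hA1 := le_abs_self r.1
    have hA2 := neg_abs_le r.1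
    have hA0 := abs_nonneg r.1
    have hA3 : |r.2| = r.2 := abs_of_pos (by omega)
    have hst : ξ r.1 ≠ ξ r.2 := perm_ne (by omega)
    have hst' : ξ r.1 ≠ -(ξ r.2) := by
      rw [← hξ.1.1 r.2]
      exact perm_ne (by omega)
    have hs : |ξ r.1| ≤ (p : ℤ) + q := by
      have := sp_bound hξ.1 (i := r.1) (by rw [sh_cast]; omega); rwa [sh_cast] at this
    have ht : |ξ r.2| ≤ (p : ℤ) + q := by
      have := sp_bound hξ.1 (i := r.2) (by rw [sh_cast]; omega); rwa [sh_cast] at this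
    have hbg : b r.2 < b r.1 → r ∈ NSet (p + q) b := by
      intro hbb
      rw [mem_NSet]
      exact ⟨h1, by rw [sh_cast]; omega, hbb⟩
    obtain ⟨i', j', hcan1, hcan2, hor⟩ := canon hst hst' hs ht
    rcases hor with hL|hR
    · have haodd : ∀ i, (a * ξ⁻¹) (-i) = - (a * ξ⁻¹) i := (sp_mul ha.1 hξi).1
      have hbodd : ∀ i, (b * ξ⁻¹) (-i) = - (b * ξ⁻¹) i := (sp_mul hb.1 hξi).1
      have hLa := hL (a * ξ⁻¹) haodd
      simp only [Equiv.Perm.mul_apply, ξ.inv_apply_self] at hLa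
      have hmemA : (i', j') ∈ NSet (p + q) (a * ξ⁻¹) := by
        rw [mem_NSet']
        refine ⟨hcan1, by rw [sh_cast]; omega, ?_⟩
        have := hLa.mpr h3
        simpa [Equiv.Perm.mul_apply] using this
      have hmemB := hsub hmemA
      rw [mem_NSet'] at hmemB
      have hLb := hL (b * ξ⁻¹) hbodd
      simp only [Equiv.Perm.mul_apply, ξ.inv_apply_self] at hLb
      have := hLb.mp (by simpa [Equiv.Perm.mul_apply] using hmemB.2.2)
      exact hbg this
    · have h1R := hR 1 (by intro r'; simp)
      simp only [Equiv.Perm.one_apply] at h1R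
      have hji : ξ r.2 < ξ r.1 := by
        have : ¬ ξ r.1 < ξ r.2 := by
          rw [← h1R]; have := le_abs_self i'; omega
        omega
      have hmix : 0 < r.1 ∧ r.1 ≤ (p : ℤ) ∧ (p : ℤ) < r.2 := by
        by_contra hcon
        push_neg at hcon
        have hcase : r.1 ≤ 0 ∨ r.2 ≤ (p : ℤ) ∨ (p : ℤ) < r.1 := by
          rcases le_or_gt r.1 0 with h'|h'
          · exact Or.inl h'
          · rcases le_or_gt r.2 (p : ℤ) with h''|h''
            · exact Or.inr (Or.inl h'')
            · exact Or.inr (Or.inr (by have := hcon h'; omega))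
        exact absurd (sh_orient hξ h1 (by omega) hcase) (by omega)
      have hyabs : |a r.1| ≤ (p : ℤ) := cc_small ha (by rw [abs_of_pos hmix.1]; exact hmix.2.1)
      have hybabs : |b r.1| ≤ (p : ℤ) := cc_small hb (by rw [abs_of_pos hmix.1]; exact hmix.2.1)
      have hK1 : r.2 - p ∈ K := (cc_mix ha hyabs hmix.2.2 (by omega)).mp h3
      exact hbg ((cc_mix hb hybabs hmix.2.2 (by omega)).mpr hK1)

/-- Sandwich transfer: values of `x` on mixed roots are determined by `K`. -/
theorem lemT (hξ : IsShuffle p q ξ) {a c x : Equiv.Perm ℤ} (ha : CChar p q K a)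
    (hc : CChar p q K c) (hx : x ∈ SignedPerm (p + q))
    (hax : NSet (p + q) (a * ξ⁻¹) ⊆ NSet (p + q) x)
    (hxc : NSet (p + q) x ⊆ NSet (p + q) (c * ξ⁻¹)) :
    ∀ s m : ℤ, |s| ≤ (p : ℤ) → (p : ℤ) < m → m ≤ (p : ℤ) + q →
      (x (ξ m) < x (ξ s) ↔ m - p ∈ K) := by
  have hq0 : (0 : ℤ) ≤ q := Int.natCast_nonneg q
  have hξi := sp_inv hξ.1
  intro s m hs hm1 hm2
  have hs1 := le_abs_self s
  have hs2 := neg_abs_le s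
  have hs0 := abs_nonneg s
  have hm3 : |m| = m := abs_of_pos (by omega)
  have hsm : ξ s ≠ ξ m := perm_ne (by omega)
  have hsm' : ξ s ≠ -(ξ m) := by
    rw [← hξ.1.1 m]
    exact perm_ne (by omega)
  have hbs : |ξ s| ≤ (p : ℤ) + q := by
    have := sp_bound hξ.1 (i := s) (by rw [sh_cast]; omega); rwa [sh_cast] at this
  have hbm : |ξ m| ≤ (p : ℤ) + q := by
    have := sp_bound hξ.1 (i := m) (by rw [sh_cast]; omega); rwa [sh_cast] at this
  have haK : a m < a s ↔ m - p ∈ K := cc_mix ha (cc_small ha hs) hm1 hm2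
  have hcK : c m < c s ↔ m - p ∈ K := cc_mix hc (cc_small hc hs) hm1 hm2
  have hane : a s ≠ a m := perm_ne (by omega)
  have hcne : c s ≠ c m := perm_ne (by omega)
  have hxne : x (ξ s) ≠ x (ξ m) := perm_ne hsm
  obtain ⟨i', j', hcan1, hcan2, hor⟩ := canon hsm hsm' hbs hbm
  rcases hor with hL|hR
  · have hLa := hL (a * ξ⁻¹) (sp_mul ha.1 hξi).1
    have hLc := hL (c * ξ⁻¹) (sp_mul hc.1 hξi).1
    have hLx := hL x hx.1
    simp only [Equiv.Perm.mul_apply, ξ.inv_apply_self] at hLa hLc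
    constructor
    · intro hxx
      have hmemx : (i', j') ∈ NSet (p + q) x := by
        rw [mem_NSet']
        exact ⟨hcan1, by rw [sh_cast]; omega, hLx.mpr hxx⟩
      have := hxc hmemx
      rw [mem_NSet'] at this
      exact hcK.mp (hLc.mp this.2.2)
    · intro hk
      have hmema : (i', j') ∈ NSet (p + q) (a * ξ⁻¹) := by
        rw [mem_NSet']
        exact ⟨hcan1, by rw [sh_cast]; omega, hLa.mpr (haK.mpr hk)⟩
      have := hax hmema
      rw [mem_NSet'] at this
      exact hLx.mp this.2.2
  · have hRa := hR (a * ξ⁻¹) (sp_mul ha.1 hξi).1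
    have hRc := hR (c * ξ⁻¹) (sp_mul hc.1 hξi).1
    have hRx := hR x hx.1
    simp only [Equiv.Perm.mul_apply, ξ.inv_apply_self] at hRa hRc
    constructor
    · intro hxx
      have hnot : ¬ (i', j') ∈ NSet (p + q) x := by
        rw [mem_NSet']
        intro hcon
        have := hRx.mp hcon.2.2
        omega
      have hnota : ¬ (i', j') ∈ NSet (p + q) (a * ξ⁻¹) := fun hcon => hnot (hax hcon)
      rw [mem_NSet'] at hnota
      push_neg at hnota
      have h5 := hnota hcan1 (by rw [sh_cast]; omega)
      simp only [Equiv.Perm.mul_apply] at h5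
      have h6 : a m < a s := by omega
      exact haK.mp h6
    · intro hk
      have hnotc : ¬ (i', j') ∈ NSet (p + q) (c * ξ⁻¹) := by
        rw [mem_NSet']
        intro hcon
        have := hRc.mp hcon.2.2
        have := hcK.mpr hk
        omega
      have hnotx : ¬ (i', j') ∈ NSet (p + q) x := fun hcon => hnotc (hxc hcon)
      rw [mem_NSet'] at hnotx
      push_neg at hnotx
      have h5 := hnotx hcan1 (by rw [sh_cast]; omega)
      omega

end Main

end TauAux
namespace TauAux

section Main

variable {p q : ℕ} {ξ : Equiv.Perm ℤ} {K : Finset ℤ}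

theorem part3 (hξ : IsShuffle p q ξ) (hK : K ⊆ Finset.Icc (1 : ℤ) (q : ℤ))
    {a c x : Equiv.Perm ℤ} (ha : a ∈ SProdComp p q K) (hc : c ∈ SProdComp p q K)
    (hx : x ∈ SignedPerm (p + q)) (h1 : wle (p + q) (a * ξ⁻¹) x)
    (h2 : wle (p + q) x (c * ξ⁻¹)) : x * ξ ∈ SProdComp p q K := by
  have hq0 : (0 : ℤ) ≤ q := Int.natCast_nonneg q
  have hp0 : (0 : ℤ) ≤ p := Int.natCast_nonneg p
  have hξi := sp_inv hξ.1
  rw [comp_char hK] at ha hc ⊢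
  rw [wle_iff (sp_mul ha.1 hξi) hx] at h1
  rw [wle_iff hx (sp_mul hc.1 hξi)] at h2
  have hT := lemT hξ ha hc hx h1 h2
  have hxb : ∀ t : ℤ, |t| ≤ (p : ℤ) + q → |x (ξ t)| ≤ (p : ℤ) + q := by
    intro t htt
    exact spq_bound hx (spq_bound hξ.1 htt)
  have hinj : ∀ t t' : ℤ, |x (ξ t)| = |x (ξ t')| → t = t' ∨ t = -t' := by
    intro t t' hh
    rcases abs_eq_abs.mp hh with h'|h'
    · exact Or.inl (ξ.injective (x.injective h'))
    · right
      have h'' : x (ξ t) = x (ξ (-t')) := by rw [hξ.1.1, hx.1]; exact h'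
      have := ξ.injective (x.injective h'')
      omega
  have hkey : ∀ m : ℤ, (p : ℤ) < m → m ≤ (p : ℤ) + q → ∀ s : ℤ, 0 ≤ s → s ≤ (p : ℤ) →
      (m - p ∈ K → x (ξ m) < -|x (ξ s)|) ∧ (m - p ∉ K → |x (ξ s)| < x (ξ m)) := by
    intro m hm1 hm2 s hs0 hsp'
    have habs : |s| ≤ (p : ℤ) := by rw [abs_of_nonneg hs0]; exact hsp'
    have habs2 : |(-s : ℤ)| ≤ (p : ℤ) := by rw [abs_neg, abs_of_nonneg hs0]; exact hsp'
    have hT1 := hT s m habs hm1 hm2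
    have hT2 := hT (-s) m habs2 hm1 hm2
    have hneg : x (ξ (-s)) = - x (ξ s) := by rw [hξ.1.1, hx.1]
    rw [hneg] at hT2
    have hne1 : x (ξ m) ≠ x (ξ s) := perm_ne (perm_ne (by omega))
    have hne2 : x (ξ m) ≠ - x (ξ s) := by
      rw [← hneg]; exact perm_ne (perm_ne (by omega))
    constructor
    · intro hk
      have g1 := hT1.mpr hk
      have g2 := hT2.mpr hk
      rcases abs_choice (x (ξ s)) with e|e <;> omega
    · intro hk
      have g1 : ¬ x (ξ m) < x (ξ s) := fun hcon => hk (hT1.mp hcon)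
      have g2 : ¬ x (ξ m) < - x (ξ s) := fun hcon => hk (hT2.mp hcon)
      rcases abs_choice (x (ξ s)) with e|e <;> omega
  have hIoc : ∀ y : ℤ, 0 ≤ y → y ≤ (p : ℤ) + q →
      (∀ t : ℤ, (p : ℤ) < t → t ≤ (p : ℤ) + q → y < |x (ξ t)|) → y ≤ (p : ℤ) := by
    intro y hy0 hy1 hlt
    have hinj2 : Set.InjOn (fun t => |x (ξ t)|) (Finset.Ioc (p : ℤ) ((p : ℤ) + q)) := by
      intro t ht t' ht' hh
      simp only [Finset.coe_Ioc, Set.mem_Ioc] at ht ht'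
      rcases hinj t t' hh with h'|h' <;> omega
    have hsub : (Finset.Ioc (p : ℤ) ((p : ℤ) + q)).image (fun t => |x (ξ t)|) ⊆
        Finset.Icc (y + 1) ((p : ℤ) + q) := by
      intro b hb
      rcases Finset.mem_image.mp hb with ⟨t, ht, rfl⟩
      rw [Finset.mem_Ioc] at ht
      rw [Finset.mem_Icc]
      refine ⟨by have := hlt t ht.1 ht.2; omega, ?_⟩
      exact hxb t (by rw [abs_of_pos (by omega)]; omega)
    have hcard : ((Finset.Ioc (p : ℤ) ((p : ℤ) + q)).image (fun t => |x (ξ t)|)).card = q := by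
      rw [Finset.card_image_of_injOn hinj2, Int.card_Ioc]
      omega
    have hle := Finset.card_le_card hsub
    rw [hcard, Int.card_Icc] at hle
    omega
  have hIcc : ∀ y : ℤ, 0 ≤ y →
      (∀ s : ℤ, 0 ≤ s → s ≤ (p : ℤ) → |x (ξ s)| < y) → (p : ℤ) < y := by
    intro y hy0 hlt
    have hinj2 : Set.InjOn (fun s => |x (ξ s)|) (Finset.Icc (0 : ℤ) (p : ℤ)) := by
      intro t ht t' ht' hh
      simp only [Finset.coe_Icc, Set.mem_Icc] at ht ht'
      rcases hinj t t' hh with h'|h' <;> omega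
    have hsub : (Finset.Icc (0 : ℤ) (p : ℤ)).image (fun s => |x (ξ s)|) ⊆
        Finset.Icc 0 (y - 1) := by
      intro b hb
      rcases Finset.mem_image.mp hb with ⟨s, hs, rfl⟩
      rw [Finset.mem_Icc] at hs
      rw [Finset.mem_Icc]
      exact ⟨abs_nonneg _, by have := hlt s hs.1 hs.2; omega⟩
    have hcard : ((Finset.Icc (0 : ℤ) (p : ℤ)).image (fun s => |x (ξ s)|)).card = p + 1 := by
      rw [Finset.card_image_of_injOn hinj2, Int.card_Icc]
      omega
    have hle := Finset.card_le_card hsub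
    rw [hcard, Int.card_Icc] at hle
    omega
  refine ⟨sp_mul hx hξ.1, ?_, ?_⟩
  · intro a' h1' h2'
    have hgoal : ∀ t : ℤ, (p : ℤ) < t → t ≤ (p : ℤ) + q → |x (ξ a')| < |x (ξ t)| := by
      intro t ht1 ht2
      have hk2 := hkey t ht1 ht2 a' (by omega) h2'
      have hnn1 := abs_nonneg (x (ξ t))
      have hnn2 := abs_nonneg (x (ξ a'))
      by_cases hk : t - p ∈ K
      · have h3 := hk2.1 hk
        rcases abs_choice (x (ξ t)) with e|e <;> rcases abs_choice (x (ξ a')) with f|f <;> omega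
      · have h3 := hk2.2 hk
        rcases abs_choice (x (ξ t)) with e|e <;> rcases abs_choice (x (ξ a')) with f|f <;> omega
    have hfin := hIoc (|x (ξ a')|) (abs_nonneg _)
      (hxb a' (by rw [abs_of_pos (by omega)]; omega)) hgoal
    simpa [Equiv.Perm.mul_apply] using hfin
  · intro a' h1' h2'
    by_cases hk : a' - p ∈ K
    · right
      refine ⟨?_, hk⟩
      have hgoal : ∀ s : ℤ, 0 ≤ s → s ≤ (p : ℤ) → |x (ξ s)| < -(x (ξ a')) := by
        intro s hs1 hs2
        have := (hkey a' h1' h2' s hs1 hs2).1 hk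
        have := abs_nonneg (x (ξ s))
        omega
      have hnn : 0 ≤ -(x (ξ a')) := by
        have h0 := hgoal 0 le_rfl hp0
        have := abs_nonneg (x (ξ 0))
        omega
      have hfin := hIcc _ hnn hgoal
      simp only [Equiv.Perm.mul_apply]
      omega
    · left
      refine ⟨?_, hk⟩
      have hgoal : ∀ s : ℤ, 0 ≤ s → s ≤ (p : ℤ) → |x (ξ s)| < x (ξ a') := by
        intro s hs1 hs2
        exact (hkey a' h1' h2' s hs1 hs2).2 hk
      have hnn : 0 ≤ x (ξ a') := by
        have h0 := hgoal 0 le_rfl hp0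
        have := abs_nonneg (x (ξ 0))
        omega
      have hfin := hIcc _ hnn hgoal
      simp only [Equiv.Perm.mul_apply]
      omega

end Main

end TauAux
namespace TauAux

/-- rank of `|a i|` among `|a 1|, …, |a m|`. -/
noncomputable def grank (m : ℕ) (a : ℤ → ℤ) (i : ℤ) : ℤ :=
  (((Finset.Icc (1 : ℤ) (m : ℤ)).filter (fun j => |a j| ≤ |a i|)).card : ℤ)

theorem grank_mono {m : ℕ} {a : ℤ → ℤ} {i j : ℤ}
    (hj1 : 1 ≤ j) (hj2 : j ≤ (m : ℤ)) (h : |a i| < |a j|) : grank m a i < grank m a j := by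
  unfold grank
  have hsub : (Finset.Icc (1 : ℤ) (m : ℤ)).filter (fun k => |a k| ≤ |a i|) ⊆
      (Finset.Icc (1 : ℤ) (m : ℤ)).filter (fun k => |a k| ≤ |a j|) :=
    Finset.monotone_filter_right _ (fun k _ (hk : |a k| ≤ |a i|) => by omega)
  have hss := (Finset.ssubset_iff_of_subset hsub).mpr
    ⟨j, by rw [Finset.mem_filter, Finset.mem_Icc]; exact ⟨⟨hj1, hj2⟩, le_rfl⟩,
      by rw [Finset.mem_filter, Finset.mem_Icc]; push_neg; intro _; omega⟩
  exact_mod_cast Finset.card_lt_card hss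

theorem grank_bounds {m : ℕ} {a : ℤ → ℤ} {i : ℤ} (hi1 : 1 ≤ i) (hi2 : i ≤ (m : ℤ)) :
    1 ≤ grank m a i ∧ grank m a i ≤ (m : ℤ) := by
  unfold grank
  constructor
  · have hpos : 0 < ((Finset.Icc (1 : ℤ) (m : ℤ)).filter (fun j => |a j| ≤ |a i|)).card :=
      Finset.card_pos.mpr ⟨i, by rw [Finset.mem_filter, Finset.mem_Icc]; exact ⟨⟨hi1, hi2⟩, le_rfl⟩⟩
    omega
  · have h2 := Finset.card_filter_le (Finset.Icc (1 : ℤ) (m : ℤ)) (fun j => |a j| ≤ |a i|)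
    have h3 : (Finset.Icc (1 : ℤ) (m : ℤ)).card = m := by rw [Int.card_Icc]; omega
    omega

theorem gc_exists (m : ℕ) (a : ℤ → ℤ)
    (h0 : ∀ i, 1 ≤ i → i ≤ (m : ℤ) → a i ≠ 0)
    (hd : ∀ i j, 1 ≤ i → i ≤ (m : ℤ) → 1 ≤ j → j ≤ (m : ℤ) → |a i| = |a j| → i = j) :
    ∃ w, w ∈ SignedPerm m ∧ (∀ i, 1 ≤ i → i ≤ (m : ℤ) → (w i < 0 ↔ a i < 0)) ∧
      (∀ i j, 1 ≤ i → i ≤ (m : ℤ) → 1 ≤ j → j ≤ (m : ℤ) →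
        (|w i| < |w j| ↔ |a i| < |a j|)) := by
  classical
  set F : ℤ → ℤ := fun i => if a i < 0 then -(grank m a i) else grank m a i with hF
  set f : ℤ → ℤ := fun i =>
    if 1 ≤ i ∧ i ≤ (m : ℤ) then F i else if 1 ≤ -i ∧ -i ≤ (m : ℤ) then -(F (-i)) else i
    with hf
  have hFabs : ∀ i, 1 ≤ i → i ≤ (m : ℤ) → |F i| = grank m a i := by
    intro i h1 h2
    obtain ⟨g1, g2⟩ := grank_bounds (a := a) h1 h2
    simp only [hF]
    split_ifs with hs
    · rw [abs_neg, abs_of_pos (by omega)]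
    · rw [abs_of_pos (by omega)]
  have hFsgn : ∀ i, 1 ≤ i → i ≤ (m : ℤ) → (F i < 0 ↔ a i < 0) := by
    intro i h1 h2
    obtain ⟨g1, g2⟩ := grank_bounds (a := a) h1 h2
    simp only [hF]
    split_ifs with hs <;> constructor <;> intro h' <;> omega
  have habs_ord : ∀ i j, 1 ≤ i → i ≤ (m : ℤ) → 1 ≤ j → j ≤ (m : ℤ) →
      (|F i| < |F j| ↔ |a i| < |a j|) := by
    intro i j h1 h2 h3 h4
    rw [hFabs i h1 h2, hFabs j h3 h4]
    constructor
    · intro h'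
      rcases lt_trichotomy (|a i|) (|a j|) with h''|h''|h''
      · exact h''
      · exact absurd (hd i j h1 h2 h3 h4 h'') (by intro he; rw [he] at h'; omega)
      · have := grank_mono (a := a) h1 h2 h''
        omega
    · exact grank_mono h3 h4
  have hfval : ∀ i, 1 ≤ i → i ≤ (m : ℤ) → f i = F i := by
    intro i h1 h2
    simp only [hf]
    rw [if_pos ⟨h1, h2⟩]
  have hfvalneg : ∀ i, 1 ≤ i → i ≤ (m : ℤ) → f (-i) = -(F i) := by
    intro i h1 h2
    simp only [hf, neg_neg]
    rw [if_neg (by omega), if_pos ⟨h1, h2⟩]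
  have hfid : ∀ i, ¬ (1 ≤ |i| ∧ |i| ≤ (m : ℤ)) → f i = i := by
    intro i hi
    have g1 := le_abs_self i
    have g2 := neg_abs_le i
    have g0 := abs_nonneg i
    simp only [hf, neg_neg]
    rcases abs_choice i with e|e <;> rw [if_neg (by omega), if_neg (by omega)]
  have hfodd : ∀ i, f (-i) = - f i := by
    intro i
    rcases lt_trichotomy i 0 with h'|h'|h'
    · by_cases hm : 1 ≤ -i ∧ -i ≤ (m : ℤ)
      · rw [hfval (-i) hm.1 hm.2]
        have e := hfvalneg (-i) hm.1 hm.2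
        rw [neg_neg] at e
        rw [e, neg_neg]
      · have hnn := abs_nonneg i
        have e1 : f (-i) = -i := hfid (-i)
          (by rw [abs_neg]; rcases abs_choice i with e|e <;> omega)
        have e2 : f i = i := hfid i (by rcases abs_choice i with e|e <;> omega)
        omega
    · subst h'
      have e2 : f 0 = 0 := hfid 0 (by simp)
      rw [neg_zero, e2]
      simp
    · by_cases hm : 1 ≤ i ∧ i ≤ (m : ℤ)
      · rw [hfvalneg i hm.1 hm.2, hfval i hm.1 hm.2]
      · have hnn := abs_nonneg i
        have e1 : f (-i) = -i := hfid (-i)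
          (by rw [abs_neg]; rcases abs_choice i with e|e <;> omega)
        have e2 : f i = i := hfid i (by rcases abs_choice i with e|e <;> omega)
        omega
  have hfabs : ∀ i, 1 ≤ |i| → |i| ≤ (m : ℤ) → |f i| = grank m a |i| := by
    intro i h1 h2
    rcases lt_trichotomy i 0 with h'|h'|h'
    · rw [abs_of_neg h'] at h1 h2 ⊢
      have := hfvalneg (-i) h1 h2
      rw [neg_neg] at this
      rw [this, abs_neg, hFabs (-i) h1 h2]
    · subst h'; simp at h1
    · rw [abs_of_pos h'] at h1 h2 ⊢
      rw [hfval i h1 h2, hFabs i h1 h2]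
  have hfne0 : ∀ i, i ≠ 0 → f i ≠ 0 := by
    intro i hi
    by_cases hm : 1 ≤ |i| ∧ |i| ≤ (m : ℤ)
    · have h1 := hfabs i hm.1 hm.2
      have h2 := grank_bounds (a := a) (i := |i|) hm.1 hm.2
      intro hc
      rw [hc] at h1
      simp at h1
      omega
    · rw [hfid i hm]
      exact hi
  have hinj : Function.Injective f := by
    intro i j hij
    have habseq : |i| = |j| := by
      by_cases hmi : 1 ≤ |i| ∧ |i| ≤ (m : ℤ) <;> by_cases hmj : 1 ≤ |j| ∧ |j| ≤ (m : ℤ)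
      · have e1 := hfabs i hmi.1 hmi.2
        have e2 := hfabs j hmj.1 hmj.2
        have e3 : grank m a |i| = grank m a |j| := by rw [← e1, ← e2, hij]
        rcases lt_trichotomy (|a (|i|)|) (|a (|j|)|) with h''|h''|h''
        · have := grank_mono (a := a) (i := |i|) hmj.1 hmj.2 h''
          omega
        · exact hd _ _ hmi.1 hmi.2 hmj.1 hmj.2 h''
        · have := grank_mono (a := a) (i := |j|) hmi.1 hmi.2 h''
          omega
      · have e1 := hfabs i hmi.1 hmi.2
        have e2 := hfid j hmj
        have h2 := grank_bounds (a := a) (i := |i|) hmi.1 hmi.2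
        have g1 := le_abs_self j
        have g2 := neg_abs_le j
        rw [e2] at hij
        rw [hij] at e1
        omega
      · have e1 := hfabs j hmj.1 hmj.2
        have e2 := hfid i hmi
        have h2 := grank_bounds (a := a) (i := |j|) hmj.1 hmj.2
        have g1 := le_abs_self i
        have g2 := neg_abs_le i
        rw [e2] at hij
        rw [← hij] at e1
        omega
      · rw [hfid i hmi, hfid j hmj] at hij
        rw [hij]
    rcases abs_eq_abs.mp habseq with h'|h'
    · exact h'
    · subst h'
      rw [hfodd j] at hij
      have hj00 : f j = 0 := by omega
      by_cases hj0 : j = 0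
      · subst hj0; simp
      · exact absurd hj00 (hfne0 j hj0)
  have hmapS : ∀ i ∈ Finset.Icc (-(m : ℤ)) m, f i ∈ Finset.Icc (-(m : ℤ)) m := by
    intro i hi
    rw [Finset.mem_Icc] at hi ⊢
    by_cases hm : 1 ≤ |i| ∧ |i| ≤ (m : ℤ)
    · have h1 := hfabs i hm.1 hm.2
      have h2 := grank_bounds (a := a) (i := |i|) hm.1 hm.2
      have g1 := le_abs_self (f i)
      have g2 := neg_abs_le (f i)
      omega
    · rw [hfid i hm]
      exact hi
  have hsurj : Function.Surjective f := by
    intro t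
    by_cases ht : |t| ≤ (m : ℤ)
    · have himg : (Finset.Icc (-(m : ℤ)) m).image f = Finset.Icc (-(m : ℤ)) m := by
        apply Finset.eq_of_subset_of_card_le
        · intro j hj
          rcases Finset.mem_image.mp hj with ⟨i, hi, rfl⟩
          exact hmapS i hi
        · exact le_of_eq (Finset.card_image_of_injective _ hinj).symm
      have : t ∈ (Finset.Icc (-(m : ℤ)) m).image f := by
        rw [himg, Finset.mem_Icc]
        exact abs_le.mp ht
      rcases Finset.mem_image.mp this with ⟨i, _, hi⟩
      exact ⟨i, hi⟩
    · exact ⟨t, hfid t (by omega)⟩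
  refine ⟨Equiv.ofBijective f ⟨hinj, hsurj⟩, ⟨fun i => hfodd i, fun i hi => hfid i (by omega)⟩,
    ?_, ?_⟩
  · intro i h1 h2
    show f i < 0 ↔ a i < 0
    rw [hfval i h1 h2]
    exact hFsgn i h1 h2
  · intro i j h1 h2 h3 h4
    show |f i| < |f j| ↔ |a i| < |a j|
    rw [hfval i h1 h2, hfval j h3 h4]
    exact habs_ord i j h1 h2 h3 h4

/-- Transfer of all signed comparisons from a word `W` to its standardization `w`. -/
theorem gc_cmp {m : ℕ} {w : Equiv.Perm ℤ} {W : ℤ → ℤ}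
    (hw : w ∈ SignedPerm m)
    (hWodd : ∀ i, W (-i) = - W i)
    (hWinj : ∀ i j, |i| ≤ (m : ℤ) → |j| ≤ (m : ℤ) → W i = W j → i = j)
    (hsgn : ∀ i, 1 ≤ i → i ≤ (m : ℤ) → (w i < 0 ↔ W i < 0))
    (habs : ∀ i j, 1 ≤ i → i ≤ (m : ℤ) → 1 ≤ j → j ≤ (m : ℤ) →
      (|w i| < |w j| ↔ |W i| < |W j|))
    (h0 : ∀ i, 1 ≤ i → i ≤ (m : ℤ) → W i ≠ 0) :
    ∀ s t : ℤ, |s| ≤ (m : ℤ) → |t| ≤ (m : ℤ) → (w t < w s ↔ W t < W s) := by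
  have hW0 : W 0 = 0 := by have := hWodd 0; simp at this; omega
  have hw0 : w 0 = 0 := sp_zero hw
  have habs' : ∀ i, 1 ≤ i → i ≤ (m : ℤ) → (|i| = i) := fun i h1 h2 => abs_of_pos (by omega)
  have hcore : ∀ i j, 1 ≤ i → i ≤ (m : ℤ) → 1 ≤ j → j ≤ (m : ℤ) → (w j < w i ↔ W j < W i) := by
    intro i j h1 h2 h3 h4
    by_cases hij : i = j
    · subst hij; constructor <;> intro h' <;> omega
    · have s1 := hsgn i h1 h2
      have s2 := hsgn j h3 h4
      have ab := habs i j h1 h2 h3 h4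
      have ab2 := habs j i h3 h4 h1 h2
      have hwne : w i ≠ w j := perm_ne hij
      have hWne : W i ≠ W j := fun h' =>
        hij (hWinj i j (by rw [abs_of_pos (by omega)]; omega)
          (by rw [abs_of_pos (by omega)]; omega) h')
      have hwz1 : w i ≠ 0 := by rw [Ne, sp_eq_zero hw]; omega
      have hwz2 : w j ≠ 0 := by rw [Ne, sp_eq_zero hw]; omega
      have hWz1 := h0 i h1 h2
      have hWz2 := h0 j h3 h4
      have n1 := abs_nonneg (w i)
      have n2 := abs_nonneg (w j)
      have n3 := abs_nonneg (W i)
      have n4 := abs_nonneg (W j)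
      rcases abs_choice (w i) with e1|e1 <;> rcases abs_choice (w j) with e2|e2 <;>
        rcases abs_choice (W i) with e3|e3 <;> rcases abs_choice (W j) with e4|e4 <;>
        constructor <;> intro h' <;> omega
  have hcoreS : ∀ i j, 1 ≤ i → i ≤ (m : ℤ) → 1 ≤ j → j ≤ (m : ℤ) →
      (w j < -(w i) ↔ W j < -(W i)) := by
    intro i j h1 h2 h3 h4
    by_cases hij : i = j
    · subst hij
      have s1 := hsgn i h1 h2
      constructor <;> intro h' <;> omega
    · have s1 := hsgn i h1 h2
      have s2 := hsgn j h3 h4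
      have ab := habs i j h1 h2 h3 h4
      have ab2 := habs j i h3 h4 h1 h2
      have hwne : w j ≠ -(w i) := by
        have : w (-i) = -(w i) := hw.1 i
        rw [← this]
        exact perm_ne (by omega)
      have hWne : W j ≠ -(W i) := by
        have hodd2 : W (-i) = -(W i) := hWodd i
        rw [← hodd2]
        intro h'
        have := hWinj j (-i) (by rw [abs_of_pos (by omega)]; omega)
          (by rw [abs_neg, abs_of_pos (by omega)]; omega) h'
        omega
      have hwz1 : w i ≠ 0 := by rw [Ne, sp_eq_zero hw]; omega
      have hwz2 : w j ≠ 0 := by rw [Ne, sp_eq_zero hw]; omega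
      have hWz1 := h0 i h1 h2
      have hWz2 := h0 j h3 h4
      have n1 := abs_nonneg (w i)
      have n2 := abs_nonneg (w j)
      have n3 := abs_nonneg (W i)
      have n4 := abs_nonneg (W j)
      rcases abs_choice (w i) with e1|e1 <;> rcases abs_choice (w j) with e2|e2 <;>
        rcases abs_choice (W i) with e3|e3 <;> rcases abs_choice (W j) with e4|e4 <;>
        constructor <;> intro h' <;> omega
  have hsgn2 : ∀ j, 1 ≤ j → j ≤ (m : ℤ) → ((w j < 0 ↔ W j < 0) ∧ (w j ≠ 0) ∧ (W j ≠ 0)) := by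
    intro j h1 h2
    exact ⟨hsgn j h1 h2, by rw [Ne, sp_eq_zero hw]; omega, h0 j h1 h2⟩
  intro s t hs ht
  have hns := abs_nonneg s
  have hnt := abs_nonneg t
  have es : ∀ u : ℤ, w u = - w (-u) := by intro u; rw [hw.1]; ring
  have eW : ∀ u : ℤ, W u = - W (-u) := by intro u; rw [hWodd]; ring
  rcases lt_trichotomy s 0 with hs0|hs0|hs0 <;> rcases lt_trichotomy t 0 with ht0|ht0|ht0
  · -- s<0, t<0
    have h1 : 1 ≤ -s := by omega
    have h2 : -s ≤ (m : ℤ) := by rcases abs_choice s with e|e <;> omega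
    have h3 : 1 ≤ -t := by omega
    have h4 : -t ≤ (m : ℤ) := by rcases abs_choice t with e|e <;> omega
    have hc := hcore (-t) (-s) h3 h4 h1 h2
    have f1 := es s; have f2 := es t; have f3 := eW s; have f4 := eW t
    omega
  · -- s<0, t=0
    subst ht0
    have h1 : 1 ≤ -s := by omega
    have h2 : -s ≤ (m : ℤ) := by rcases abs_choice s with e|e <;> omega
    have hsx := hsgn2 (-s) h1 h2
    have f1 := es s; have f3 := eW s
    rw [hw0, hW0]
    obtain ⟨u1, u2, u3⟩ := hsx
    constructor <;> intro h' <;> omega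
  · -- s<0, t>0
    have h1 : 1 ≤ -s := by omega
    have h2 : -s ≤ (m : ℤ) := by rcases abs_choice s with e|e <;> omega
    have h3 : 1 ≤ t := by omega
    have h4 : t ≤ (m : ℤ) := by rcases abs_choice t with e|e <;> omega
    have hc := hcoreS (-s) t h1 h2 h3 h4
    have f1 := es s; have f3 := eW s
    constructor <;> intro h' <;> omega
  · -- s=0, t<0
    subst hs0
    have h3 : 1 ≤ -t := by omega
    have h4 : -t ≤ (m : ℤ) := by rcases abs_choice t with e|e <;> omega
    have htx := hsgn2 (-t) h3 h4
    have f2 := es t; have f4 := eW t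
    rw [hw0, hW0]
    obtain ⟨u1, u2, u3⟩ := htx
    constructor <;> intro h' <;> omega
  · subst hs0; subst ht0
    rw [hw0, hW0]
  · -- s=0, t>0
    subst hs0
    have h3 : 1 ≤ t := by omega
    have h4 : t ≤ (m : ℤ) := by rcases abs_choice t with e|e <;> omega
    have htx := hsgn2 t h3 h4
    rw [hw0, hW0]
    obtain ⟨u1, u2, u3⟩ := htx
    constructor <;> intro h' <;> omega
  · -- s>0, t<0
    have h1 : 1 ≤ s := by omega
    have h2 : s ≤ (m : ℤ) := by rcases abs_choice s with e|e <;> omega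
    have h3 : 1 ≤ -t := by omega
    have h4 : -t ≤ (m : ℤ) := by rcases abs_choice t with e|e <;> omega
    have hc := hcoreS (-t) s h3 h4 h1 h2
    have f2 := es t; have f4 := eW t
    have hnw : w s ≠ w t := perm_ne (by omega)
    have hnW : W s ≠ W t := fun h' => by have := hWinj s t hs ht h'; omega
    constructor <;> intro h' <;> omega
  · -- s>0, t=0
    subst ht0
    have h1 : 1 ≤ s := by omega
    have h2 : s ≤ (m : ℤ) := by rcases abs_choice s with e|e <;> omega
    have hsx := hsgn2 s h1 h2
    rw [hw0, hW0]
    obtain ⟨u1, u2, u3⟩ := hsx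
    constructor <;> intro h' <;> omega
  · -- s>0, t>0
    have h1 : 1 ≤ s := by omega
    have h2 : s ≤ (m : ℤ) := by rcases abs_choice s with e|e <;> omega
    have h3 : 1 ≤ t := by omega
    have h4 : t ≤ (m : ℤ) := by rcases abs_choice t with e|e <;> omega
    exact hcore s t h1 h2 h3 h4

end TauAux
namespace TauAux

section Main

variable {p q : ℕ} {ξ : Equiv.Perm ℤ} {K : Finset ℤ}

theorem zdag (hξ : IsShuffle p q ξ) (hK : K ⊆ Finset.Icc (1 : ℤ) (q : ℤ))
    {z : Equiv.Perm ℤ} (hz : z ∈ SignedPerm (p + q)) :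
    ∃ zd ∈ SProdComp p q K,
      (∀ x', CChar p q K x' → NSet (p + q) z ⊆ NSet (p + q) (x' * ξ⁻¹) →
        NSet (p + q) z ⊆ NSet (p + q) (zd * ξ⁻¹) ∧ NSet (p + q) zd ⊆ NSet (p + q) x') ∧
      (∀ x', CChar p q K x' → NSet (p + q) (x' * ξ⁻¹) ⊆ NSet (p + q) z →
        NSet (p + q) (zd * ξ⁻¹) ⊆ NSet (p + q) z ∧ NSet (p + q) x' ⊆ NSet (p + q) zd) := by
  classical
  have hq0 : (0 : ℤ) ≤ q := Int.natCast_nonneg q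
  have hp0 : (0 : ℤ) ≤ p := Int.natCast_nonneg p
  have hξi := sp_inv hξ.1
  set n : ℕ := p + q with hn
  set W : ℤ → ℤ := fun r => z (ξ r) with hW
  have hWodd : ∀ r, W (-r) = - W r := by
    intro r
    simp only [hW]
    rw [hξ.1.1, hz.1]
  have hWinj : ∀ i j : ℤ, W i = W j → i = j := by
    intro i j h
    exact ξ.injective (z.injective h)
  have hWb : ∀ r : ℤ, |r| ≤ (p : ℤ) + q → |W r| ≤ (p : ℤ) + q := by
    intro r hr
    exact spq_bound hz (spq_bound hξ.1 hr)
  have hW0 : ∀ r : ℤ, r ≠ 0 → W r ≠ 0 := by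
    intro r hr hc
    simp only [hW] at hc
    rw [sp_eq_zero hz, sp_eq_zero hξ.1] at hc
    exact hr hc
  -- the u-part: standardization of W on [1,p]
  obtain ⟨u2, hu2, hu2sgn, hu2abs⟩ := gc_exists p W
    (fun i h1 h2 => hW0 i (by omega))
    (fun i j h1 h2 h3 h4 h => by
      rcases abs_eq_abs.mp h with h'|h'
      · exact hWinj i j h'
      · have : W i = W (-j) := by rw [hWodd]; exact h'
        have := hWinj _ _ this
        omega)
  have GU : ∀ s t : ℤ, |s| ≤ (p : ℤ) → |t| ≤ (p : ℤ) → (u2 t < u2 s ↔ W t < W s) :=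
    gc_cmp hu2 hWodd (fun i j _ _ h => hWinj i j h) hu2sgn hu2abs
      (fun i h1 h2 => hW0 i (by omega))
  -- the v-part: standardization of the K-twisted word
  set M : ℤ := (p : ℤ) + q + 1 with hM
  set D : ℤ → ℤ := fun k =>
    if k ∈ K then W ((p : ℤ) + k) - M else W ((p : ℤ) + k) + M with hD
  have hDbound : ∀ k : ℤ, 1 ≤ k → k ≤ (q : ℤ) → |W ((p : ℤ) + k)| ≤ (p : ℤ) + q := by
    intro k h1 h2
    exact hWb _ (by rw [abs_of_pos (by omega)]; omega)
  have hDpos : ∀ k : ℤ, 1 ≤ k → k ≤ (q : ℤ) → (k ∈ K → D k < 0) ∧ (k ∉ K → 0 < D k) := by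
    intro k h1 h2
    have hb := hDbound k h1 h2
    have g1 := le_abs_self (W ((p : ℤ) + k))
    have g2 := neg_abs_le (W ((p : ℤ) + k))
    constructor <;> intro hk <;> simp only [hD]
    · rw [if_pos hk]; omega
    · rw [if_neg hk]; omega
  have hDabs : ∀ k : ℤ, 1 ≤ k → k ≤ (q : ℤ) →
      |D k| = (if k ∈ K then - W ((p : ℤ) + k) else W ((p : ℤ) + k)) + M := by
    intro k h1 h2
    have hb := hDbound k h1 h2
    have g1 := le_abs_self (W ((p : ℤ) + k))
    have g2 := neg_abs_le (W ((p : ℤ) + k))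
    simp only [hD]
    split_ifs with hk
    · rw [abs_of_neg (by omega)]; ring
    · rw [abs_of_pos (by omega)]
  obtain ⟨v2, hv2, hv2sgn, hv2abs⟩ := gc_exists q D
    (fun k h1 h2 => by
      have := hDpos k h1 h2
      by_cases hk : k ∈ K
      · have := this.1 hk; omega
      · have := this.2 hk; omega)
    (fun i j h1 h2 h3 h4 h => by
      rw [hDabs i h1 h2, hDabs j h3 h4] at h
      have h' : (if i ∈ K then - W ((p : ℤ) + i) else W ((p : ℤ) + i)) =
          (if j ∈ K then - W ((p : ℤ) + j) else W ((p : ℤ) + j)) := by omega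
      split_ifs at h' with k1 k2 k2
      · have := hWinj _ _ (neg_injective h'); omega
      · have : W ((p : ℤ) + i) = W (-(((p : ℤ) + j))) := by rw [hWodd]; omega
        have := hWinj _ _ this
        omega
      · have : W (-((p : ℤ) + i)) = W ((p : ℤ) + j) := by rw [hWodd]; omega
        have := hWinj _ _ this
        omega
      · have := hWinj _ _ h'; omega)
  -- signed (odd) extension of D
  set Dt : ℤ → ℤ := fun k => if 0 < k then D k else if k < 0 then -(D (-k)) else 0 with hDt
  have hDtodd : ∀ k, Dt (-k) = - Dt k := by
    intro k
    simp only [hDt, neg_neg]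
    rcases lt_trichotomy k 0 with h|h|h
    · rw [if_pos (by omega : (0:ℤ) < -k), if_neg (by omega : ¬ (0:ℤ) < k), if_pos h, neg_neg]
    · subst h; simp
    · rw [if_neg (by omega : ¬ (0:ℤ) < -k), if_pos (by omega : -k < (0:ℤ)), if_pos h]
  have hDtpos : ∀ k, 0 < k → Dt k = D k := by
    intro k h; simp only [hDt]; rw [if_pos h]
  have hDtval : ∀ k : ℤ, 1 ≤ k → k ≤ (q : ℤ) →
      (k ∈ K → Dt k = W ((p : ℤ) + k) - M) ∧ (k ∉ K → Dt k = W ((p : ℤ) + k) + M) := by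
    intro k h1 h2
    rw [hDtpos k (by omega)]
    constructor <;> intro hk <;> simp only [hD]
    · rw [if_pos hk]
    · rw [if_neg hk]
  have hDt0 : ∀ k : ℤ, 1 ≤ k → k ≤ (q : ℤ) → Dt k ≠ 0 := by
    intro k h1 h2
    rw [hDtpos k (by omega)]
    have := hDpos k h1 h2
    by_cases hk : k ∈ K
    · have := this.1 hk; omega
    · have := this.2 hk; omega
  have hDtinj : ∀ i j : ℤ, |i| ≤ (q : ℤ) → |j| ≤ (q : ℤ) → Dt i = Dt j → i = j := by
    intro i j hi hj h
    have hni := abs_nonneg i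
    have hnj := abs_nonneg j
    have key : ∀ a b : ℤ, 1 ≤ a → a ≤ (q : ℤ) → 1 ≤ b → b ≤ (q : ℤ) → D a = D b → a = b := by
      intro a b ha1 ha2 hb1 hb2 hab
      have h1 : |D a| = |D b| := by rw [hab]
      rw [hDabs a ha1 ha2, hDabs b hb1 hb2] at h1
      have h2 : (if a ∈ K then - W ((p : ℤ) + a) else W ((p : ℤ) + a)) =
          (if b ∈ K then - W ((p : ℤ) + b) else W ((p : ℤ) + b)) := by omega
      split_ifs at h2 with k1 k2 k2
      · have := hWinj _ _ (neg_injective h2); omega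
      · have h3 : W ((p : ℤ) + a) = W (-(((p : ℤ) + b))) := by rw [hWodd]; omega
        have := hWinj _ _ h3; omega
      · have h3 : W (-((p : ℤ) + a)) = W ((p : ℤ) + b) := by rw [hWodd]; omega
        have := hWinj _ _ h3; omega
      · have := hWinj _ _ h2; omega
    have keyne : ∀ a b : ℤ, 1 ≤ a → a ≤ (q : ℤ) → 1 ≤ b → b ≤ (q : ℤ) → D a = -(D b) → False := by
      intro a b ha1 ha2 hb1 hb2 hab
      have h1 : |D a| = |D b| := by rw [hab, abs_neg]
      rw [hDabs a ha1 ha2, hDabs b hb1 hb2] at h1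
      have h2 : (if a ∈ K then - W ((p : ℤ) + a) else W ((p : ℤ) + a)) =
          (if b ∈ K then - W ((p : ℤ) + b) else W ((p : ℤ) + b)) := by omega
      have hpa := hDpos a ha1 ha2
      have hpb := hDpos b hb1 hb2
      split_ifs at h2 with k1 k2 k2
      · have := hpa.1 k1; have := hpb.1 k2; omega
      · have h3 : W ((p : ℤ) + a) = W (-(((p : ℤ) + b))) := by rw [hWodd]; omega
        have := hWinj _ _ h3; omega
      · have h3 : W (-((p : ℤ) + a)) = W ((p : ℤ) + b) := by rw [hWodd]; omega
        have := hWinj _ _ h3; omega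
      · have := hpa.2 k1; have := hpb.2 k2; omega
    rcases lt_trichotomy i 0 with h'|h'|h' <;> rcases lt_trichotomy j 0 with h''|h''|h''
    · -- both negative
      have e1 : Dt i = -(D (-i)) := by simp only [hDt]; rw [if_neg (by omega), if_pos h']
      have e2 : Dt j = -(D (-j)) := by simp only [hDt]; rw [if_neg (by omega), if_pos h'']
      rw [e1, e2] at h
      have := key (-i) (-j) (by omega) (by rcases abs_choice i with e|e <;> omega)
        (by omega) (by rcases abs_choice j with e|e <;> omega) (by omega)
      omega
    · exfalso
      have e1 : Dt i = -(D (-i)) := by simp only [hDt]; rw [if_neg (by omega), if_pos h']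
      have e2 : Dt j = 0 := by subst h''; simp only [hDt]; rw [if_neg (by omega), if_neg (by omega)]
      rw [e1, e2] at h
      have := hDt0 (-i) (by omega) (by rcases abs_choice i with e|e <;> omega)
      rw [hDtpos (-i) (by omega)] at this
      omega
    · exfalso
      have e1 : Dt i = -(D (-i)) := by simp only [hDt]; rw [if_neg (by omega), if_pos h']
      have e2 : Dt j = D j := hDtpos j h''
      rw [e1, e2] at h
      exact keyne j (-i) (by omega) (by rcases abs_choice j with e|e <;> omega)
        (by omega) (by rcases abs_choice i with e|e <;> omega) (by omega)
    · exfalso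
      have e1 : Dt i = 0 := by subst h'; simp only [hDt]; rw [if_neg (by omega), if_neg (by omega)]
      have e2 : Dt j = -(D (-j)) := by simp only [hDt]; rw [if_neg (by omega), if_pos h'']
      rw [e1, e2] at h
      have := hDt0 (-j) (by omega) (by rcases abs_choice j with e|e <;> omega)
      rw [hDtpos (-j) (by omega)] at this
      omega
    · omega
    · exfalso
      have e1 : Dt i = 0 := by subst h'; simp only [hDt]; rw [if_neg (by omega), if_neg (by omega)]
      have e2 : Dt j = D j := hDtpos j h''
      rw [e1, e2] at h
      have := hDt0 j (by omega) (by rcases abs_choice j with e|e <;> omega)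
      rw [hDtpos j (by omega)] at this
      omega
    · exfalso
      have e1 : Dt i = D i := hDtpos i h'
      have e2 : Dt j = -(D (-j)) := by simp only [hDt]; rw [if_neg (by omega), if_pos h'']
      rw [e1, e2] at h
      exact keyne i (-j) (by omega) (by rcases abs_choice i with e|e <;> omega)
        (by omega) (by rcases abs_choice j with e|e <;> omega) h
    · exfalso
      have e1 : Dt i = D i := hDtpos i h'
      have e2 : Dt j = 0 := by subst h''; simp only [hDt]; rw [if_neg (by omega), if_neg (by omega)]
      rw [e1, e2] at h
      have := hDt0 i (by omega) (by rcases abs_choice i with e|e <;> omega)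
      rw [hDtpos i (by omega)] at this
      omega
    · have e1 : Dt i = D i := hDtpos i h'
      have e2 : Dt j = D j := hDtpos j h''
      rw [e1, e2] at h
      exact key i j (by omega) (by rcases abs_choice i with e|e <;> omega)
        (by omega) (by rcases abs_choice j with e|e <;> omega) h
  have GV : ∀ s t : ℤ, |s| ≤ (q : ℤ) → |t| ≤ (q : ℤ) → (v2 t < v2 s ↔ Dt t < Dt s) :=
    gc_cmp hv2 hDtodd hDtinj
      (fun i h1 h2 => by rw [hDtpos i (by omega)]; exact hv2sgn i h1 h2)
      (fun i j h1 h2 h3 h4 => by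
        rw [hDtpos i (by omega), hDtpos j (by omega)]; exact hv2abs i j h1 h2 h3 h4)
      hDt0
  -- the shifted product
  set zd : Equiv.Perm ℤ := sprodPerm p q u2 v2 hu2 hv2 with hzd
  have hspz : IsSProd p q u2 v2 zd := sprodPerm_spec hu2 hv2
  have hzdsp : zd ∈ SignedPerm (p + q) := hspz.1
  have hNega : NegaSet q v2 = K := by
    ext k
    unfold NegaSet
    rw [Finset.mem_filter, Finset.mem_Icc]
    constructor
    · rintro ⟨⟨h1, h2⟩, h3⟩
      rw [hv2sgn k h1 h2] at h3
      by_cases hk : k ∈ K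
      · exact hk
      · have := (hDpos k h1 h2).2 hk
        omega
    · intro hk
      have hIcc := Finset.mem_Icc.mp (hK hk)
      refine ⟨hIcc, ?_⟩
      rw [hv2sgn k hIcc.1 hIcc.2]
      exact (hDpos k hIcc.1 hIcc.2).1 hk
  have hmem : zd ∈ SProdComp p q K := ⟨u2, v2, hu2, hv2, hNega, hspz⟩
  have hczd : CChar p q K zd := (comp_char hK).mp hmem
  -- value lemmas
  have Z1 : ∀ r : ℤ, |r| ≤ (p : ℤ) → zd r = u2 r := by
    intro r hr
    rw [hzd, sprodPerm_apply, if_pos hr]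
  have Z2 : ∀ r : ℤ, (p : ℤ) < |r| → |r| ≤ (p : ℤ) + q →
      zd r = shiftFun p (v2 (ush p r)) := by
    intro r h1 h2
    rw [hzd, sprodPerm_apply, if_neg (by omega), if_pos h2]
  -- v-block comparisons of zd vs Dt
  have VB : ∀ s t : ℤ, (p : ℤ) < |s| → |s| ≤ (p : ℤ) + q → (p : ℤ) < |t| →
      |t| ≤ (p : ℤ) + q → (zd t < zd s ↔ Dt (ush p t) < Dt (ush p s)) := by
    intro s t hs1 hs2 ht1 ht2
    rw [Z2 s hs1 hs2, Z2 t ht1 ht2]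
    have hsu : |ush p s| = |s| - p := ush_abs hs1
    have htu : |ush p t| = |t| - p := ush_abs ht1
    have hv2s : v2 (ush p s) ≠ 0 := by
      rw [Ne, sp_eq_zero hv2]
      intro hc
      rw [hc] at hsu
      simp at hsu
      omega
    have hv2t : v2 (ush p t) ≠ 0 := by
      rw [Ne, sp_eq_zero hv2]
      intro hc
      rw [hc] at htu
      simp at htu
      omega
    rw [shiftFun_lt hv2t hv2s]
    exact GV (ush p s) (ush p t) (by omega) (by omega)
  -- the KS predicate: "the value at big position s is negative" (for component members)
  set KS : ℤ → Prop := fun s => if 0 < s then s - (p : ℤ) ∈ K else ¬ (-s - (p : ℤ) ∈ K)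
    with hKSdef
  have KSpos : ∀ t : ℤ, 0 < t → (KS t ↔ t - (p : ℤ) ∈ K) := by
    intro t ht; simp only [hKSdef]; rw [if_pos ht]
  have KSneg : ∀ s : ℤ, s < 0 → (KS s ↔ ¬ (-s - (p : ℤ) ∈ K)) := by
    intro s hs; simp only [hKSdef]; rw [if_neg (by omega)]
  have MIXG : ∀ (ω : Equiv.Perm ℤ), CChar p q K ω → ∀ y s : ℤ, |y| ≤ (p : ℤ) →
      (p : ℤ) < |s| → |s| ≤ (p : ℤ) + q → (ω s < y ↔ KS s) := by
    intro ω hω y s hy hs1 hs2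
    rcases lt_trichotomy s 0 with hs|hs|hs
    · have hs0 : |s| = -s := abs_of_neg hs
      have e : ω s = - ω (-s) := by conv_lhs => rw [← neg_neg s]; rw [hω.1.1]
      have h2 := cc_mix' hω (y := -y) (b := -s) (by rw [abs_neg]; exact hy)
        (by omega) (by omega)
      rw [KSneg s hs, ← h2]
      constructor <;> intro h' <;> omega
    · exfalso; rw [hs] at hs1; simp at hs1; omega
    · have hs0 : |s| = s := abs_of_pos hs
      have h2 := cc_mix hω (y := y) (b := s) hy (by omega) (by omega)
      rw [KSpos s hs, ← h2]
  have MIXG' : ∀ (ω : Equiv.Perm ℤ), CChar p q K ω → ∀ y s : ℤ, |y| ≤ (p : ℤ) →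
      (p : ℤ) < |s| → |s| ≤ (p : ℤ) + q → (y < ω s ↔ ¬ KS s) := by
    intro ω hω y s hy hs1 hs2
    have h3 := MIXG ω hω y s hy hs1 hs2
    have h4 : (p : ℤ) < |ω s| := cc_bigabs hω hs1 hs2
    have g1 := le_abs_self y
    have g2 := neg_abs_le y
    rw [← h3]
    rcases abs_choice (ω s) with e|e <;> constructor <;> intro h' <;> omega
  have SGNB : ∀ (ω : Equiv.Perm ℤ), CChar p q K ω → ∀ s : ℤ, (p : ℤ) < |s| →
      |s| ≤ (p : ℤ) + q → ((KS s → ω s < -(p : ℤ)) ∧ (¬ KS s → (p : ℤ) < ω s)) := by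
    intro ω hω s hs1 hs2
    have h1 := MIXG ω hω 0 s (by simpa using hp0) hs1 hs2
    have h2 : (p : ℤ) < |ω s| := cc_bigabs hω hs1 hs2
    constructor
    · intro h'
      have h3 := h1.mpr h'
      rcases abs_choice (ω s) with e|e <;> omega
    · intro h'
      have h3 : ¬ (ω s < 0) := fun hc => h' (h1.mp hc)
      rcases abs_choice (ω s) with e|e <;> omega
  -- the master v-block comparison for zd
  have VM : ∀ s t : ℤ, (p : ℤ) < |s| → |s| ≤ (p : ℤ) + q → (p : ℤ) < t → t ≤ (p : ℤ) + q →
      ((KS t → KS s → (zd t < zd s ↔ W t < W s)) ∧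
       (KS t → ¬ KS s → zd t < zd s) ∧
       (¬ KS t → KS s → ¬ (zd t < zd s)) ∧
       (¬ KS t → ¬ KS s → (zd t < zd s ↔ W t < W s))) := by
    intro s t hs1 hs2 ht1 ht2
    have htabs : |t| = t := abs_of_pos (by omega)
    have hVB := VB s t hs1 hs2 (by omega) (by omega)
    have hut : ush p t = t - p := by unfold ush; split_ifs <;> omega
    have ht' := hDtval (t - p) (by omega) (by omega)
    have hWt' : (p : ℤ) + (t - p) = t := by ring
    rw [hWt'] at ht'
    have hbt : |W t| ≤ (p : ℤ) + q := hWb t (by omega)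
    have hbtg1 := le_abs_self (W t)
    have hbtg2 := neg_abs_le (W t)
    have hKt := KSpos t (by omega)
    rcases lt_trichotomy s 0 with hs|hs|hs
    · have hs0 : |s| = -s := abs_of_neg hs
      have hus : ush p s = s + p := by unfold ush; split_ifs <;> omega
      have harg : -(s + p) = -s - p := by ring
      have e2 : Dt (s + p) = -(D (-s - p)) := by
        simp only [hDt]
        rw [if_neg (by omega), if_pos (by omega), harg]
      have hDts : Dt (-s - p) = D (-s - p) := hDtpos _ (by omega)
      have hs' := hDtval (-s - p) (by omega) (by omega)
      have hWs' : (p : ℤ) + (-s - p) = -s := by ring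
      rw [hWs'] at hs'
      have hWneg : W (-s) = - W s := hWodd s
      have hbs : |W s| ≤ (p : ℤ) + q := hWb s (by omega)
      have hbsg1 := le_abs_self (W s)
      have hbsg2 := neg_abs_le (W s)
      have hKs := KSneg s hs
      rw [hVB, hut, hus, e2]
      by_cases kt : t - (p : ℤ) ∈ K <;> by_cases ks : -s - (p : ℤ) ∈ K
      · have g1 := ht'.1 kt
        have g2 := hs'.1 ks
        rw [← hDts, g1, g2]
        refine ⟨fun _ h' => by exfalso; rw [hKs] at h'; exact h' ks, fun _ _ => by omega,
          fun h' _ => by exfalso; exact h' (hKt.mpr kt), fun h' _ => by exfalso; exact h' (hKt.mpr kt)⟩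
      · have g1 := ht'.1 kt
        have g2 := hs'.2 ks
        rw [← hDts, g1, g2]
        refine ⟨fun _ h' => ?_, fun _ h' => by exfalso; rw [hKs] at h'; exact h' ks,
          fun h' _ => by exfalso; exact h' (hKt.mpr kt), fun h' _ => by exfalso; exact h' (hKt.mpr kt)⟩
        constructor <;> intro h'' <;> omega
      · have g1 := ht'.2 kt
        have g2 := hs'.1 ks
        rw [← hDts, g1, g2]
        refine ⟨fun h' _ => by exfalso; rw [hKt] at h'; exact kt h', fun h' _ => by exfalso; rw [hKt] at h'; exact kt h',
          fun _ h' => by exfalso; rw [hKs] at h'; exact h' ks, fun _ _ => by omega⟩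
      · have g1 := ht'.2 kt
        have g2 := hs'.2 ks
        rw [← hDts, g1, g2]
        refine ⟨fun h' _ => by exfalso; rw [hKt] at h'; exact kt h',
          fun h' _ => by exfalso; rw [hKt] at h'; exact kt h',
          fun _ _ => by omega, fun _ h' => absurd (hKs.mpr ks) h'⟩
    · exfalso; rw [hs] at hs1; simp at hs1; omega
    · have hs0 : |s| = s := abs_of_pos hs
      have hus : ush p s = s - p := by unfold ush; split_ifs <;> omega
      have hs' := hDtval (s - p) (by omega) (by omega)
      have hWs' : (p : ℤ) + (s - p) = s := by ring
      rw [hWs'] at hs'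
      have hbs : |W s| ≤ (p : ℤ) + q := hWb s (by omega)
      have hbsg1 := le_abs_self (W s)
      have hbsg2 := neg_abs_le (W s)
      have hKs := KSpos s hs
      rw [hVB, hut, hus]
      by_cases kt : t - (p : ℤ) ∈ K <;> by_cases ks : s - (p : ℤ) ∈ K
      · rw [ht'.1 kt, hs'.1 ks]
        refine ⟨fun _ _ => by constructor <;> intro h'' <;> omega,
          fun _ h' => by exfalso; exact h' (hKs.mpr ks),
          fun h' _ => by exfalso; exact h' (hKt.mpr kt),
          fun h' _ => by exfalso; exact h' (hKt.mpr kt)⟩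
      · rw [ht'.1 kt, hs'.2 ks]
        refine ⟨fun _ h' => by exfalso; rw [hKs] at h'; exact ks h', fun _ _ => by omega,
          fun h' _ => by exfalso; exact h' (hKt.mpr kt),
          fun h' _ => by exfalso; exact h' (hKt.mpr kt)⟩
      · rw [ht'.2 kt, hs'.1 ks]
        refine ⟨fun h' _ => by exfalso; rw [hKt] at h'; exact kt h',
          fun h' _ => by exfalso; rw [hKt] at h'; exact kt h',
          fun _ _ => by omega,
          fun _ h' => by exfalso; exact h' (hKs.mpr ks)⟩
      · rw [ht'.2 kt, hs'.2 ks]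
        refine ⟨fun h' _ => by exfalso; rw [hKt] at h'; exact kt h',
          fun h' _ => by exfalso; rw [hKt] at h'; exact kt h',
          fun _ h' => by exfalso; rw [hKs] at h'; exact ks h',
          fun _ _ => by constructor <;> intro h'' <;> omega⟩
  -- small values of zd
  have hzd_small : ∀ r : ℤ, |r| ≤ (p : ℤ) → |zd r| ≤ (p : ℤ) := by
    intro r hr
    rw [Z1 r hr]
    exact sp_bound hu2 hr
  have hξb : ∀ a : ℤ, |a| ≤ (p : ℤ) + q → |ξ a| ≤ (p : ℤ) + q := by
    intro a ha
    have := sp_bound hξ.1 (i := a) (by rw [sh_cast]; omega)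
    rwa [sh_cast] at this
  have hξib : ∀ a : ℤ, |a| ≤ (p : ℤ) + q → |ξ⁻¹ a| ≤ (p : ℤ) + q := by
    intro a ha
    have := sp_bound hξi (i := a) (by rw [sh_cast]; omega)
    rwa [sh_cast] at this
  refine ⟨zd, hmem, ?_, ?_⟩
  · -- direction for meets: z is a lower bound
    intro x' hx' hzx
    have CT : ∀ a b : ℤ, a ≠ b → a ≠ -b → |a| ≤ (p : ℤ) + q → |b| ≤ (p : ℤ) + q →
        ξ a < ξ b → W b < W a → x' b < x' a := by
      intro a b hne hne' hba hbb hlt hWc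
      have hnx1 : ξ a ≠ ξ b := perm_ne hne
      have hnx2 : ξ a ≠ -(ξ b) := by rw [← hξ.1.1 b]; exact perm_ne hne'
      obtain ⟨i', j', hc1, hc2, hor⟩ := canon hnx1 hnx2 (hξb a hba) (hξb b hbb)
      rcases hor with hL|hR
      · have hLz := hL z hz.1
        have hLx := hL (x' * ξ⁻¹) (sp_mul hx'.1 hξi).1
        simp only [Equiv.Perm.mul_apply, ξ.inv_apply_self] at hLx
        simp only [hW] at hWc
        have hmem' : (i', j') ∈ NSet (p + q) z :=
          mem_NSet'.mpr ⟨hc1, by rw [sh_cast]; omega, hLz.mpr hWc⟩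
        have := hzx hmem'
        rw [mem_NSet'] at this
        have h5 := this.2.2
        simp only [Equiv.Perm.mul_apply] at h5
        exact hLx.mp h5
      · exfalso
        have h1R := hR 1 (fun r' => by simp)
        simp only [Equiv.Perm.one_apply] at h1R
        have g := le_abs_self i'
        omega
    constructor
    · -- L4a : NSet z ⊆ NSet (zd ξ⁻¹)
      intro r hr
      rw [mem_NSet] at hr ⊢
      obtain ⟨h1, h2, h3⟩ := hr
      rw [sh_cast] at h2
      refine ⟨h1, by rw [sh_cast]; omega, ?_⟩
      have hA1 := le_abs_self r.1
      have hA2 := neg_abs_le r.1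
      have hA0 := abs_nonneg r.1
      have hts := sh_inv_pos hξ (i := r.2) (by omega) (by omega)
      have hsb : |ξ⁻¹ r.1| ≤ (p : ℤ) + q := hξib r.1 (by omega)
      have hne1 : ξ⁻¹ r.1 ≠ ξ⁻¹ r.2 := perm_ne (by omega)
      have hne2 : ξ⁻¹ r.1 ≠ -(ξ⁻¹ r.2) := by
        rw [← hξi.1 r.2]; exact perm_ne (by omega)
      have hWt : W (ξ⁻¹ r.2) = z r.2 := by simp only [hW]; rw [ξ.apply_inv_self]
      have hWs : W (ξ⁻¹ r.1) = z r.1 := by simp only [hW]; rw [ξ.apply_inv_self]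
      have hzW : W (ξ⁻¹ r.2) < W (ξ⁻¹ r.1) := by rw [hWt, hWs]; exact h3
      have hxf : x' (ξ⁻¹ r.2) < x' (ξ⁻¹ r.1) := by
        have h6 := hzx (mem_NSet.mpr ⟨h1, by rw [sh_cast]; omega, h3⟩)
        rw [mem_NSet] at h6
        have h5 := h6.2.2
        simpa [Equiv.Perm.mul_apply] using h5
      show (zd * ξ⁻¹) r.2 < (zd * ξ⁻¹) r.1
      simp only [Equiv.Perm.mul_apply]
      rcases le_or_gt (ξ⁻¹ r.2) (p : ℤ) with htp|htp <;>
        rcases le_or_gt (|ξ⁻¹ r.1|) (p : ℤ) with hsp|hsp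
      · rw [Z1 _ (by rw [abs_of_pos (by omega)]; omega), Z1 _ hsp]
        exact (GU _ _ hsp (by rw [abs_of_pos (by omega)]; omega)).mpr hzW
      · -- t small, s big
        have hks : ¬ KS (ξ⁻¹ r.1) :=
          (MIXG' x' hx' (x' (ξ⁻¹ r.2)) _ (cc_small hx' (by rw [abs_of_pos (by omega)]; omega))
            hsp hsb).mp hxf
        have h7 := (SGNB zd hczd _ hsp hsb).2 hks
        have h8 := hzd_small (ξ⁻¹ r.2) (by rw [abs_of_pos (by omega)]; omega)
        have g1 := le_abs_self (zd (ξ⁻¹ r.2))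
        omega
      · -- t big, s small
        have hkt : KS (ξ⁻¹ r.2) :=
          (MIXG x' hx' (x' (ξ⁻¹ r.1)) _ (cc_small hx' hsp)
            (by rw [abs_of_pos (by omega)]; omega) (by rw [abs_of_pos (by omega)]; omega)).mp hxf
        exact (MIXG zd hczd (zd (ξ⁻¹ r.1)) _ (hzd_small _ hsp)
          (by rw [abs_of_pos (by omega)]; omega) (by rw [abs_of_pos (by omega)]; omega)).mpr hkt
      · -- v block
        have hvm := VM (ξ⁻¹ r.1) (ξ⁻¹ r.2) hsp hsb htp hts.2
        by_cases kt : KS (ξ⁻¹ r.2) <;> by_cases ks : KS (ξ⁻¹ r.1)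
        · exact (hvm.1 kt ks).mpr hzW
        · exact hvm.2.1 kt ks
        · exfalso
          have a1 := (SGNB x' hx' _ (by rw [abs_of_pos (by omega)]; omega)
            (by rw [abs_of_pos (by omega)]; omega)).2 kt
          have a2 := (SGNB x' hx' _ hsp hsb).1 ks
          omega
        · exact (hvm.2.2.2 kt ks).mpr hzW
    · -- L4b : NSet zd ⊆ NSet x'
      intro r hr
      rw [mem_NSet] at hr ⊢
      obtain ⟨h1, h2, h3⟩ := hr
      rw [sh_cast] at h2
      refine ⟨h1, by rw [sh_cast]; omega, ?_⟩
      have hA1 := le_abs_self r.1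
      have hA2 := neg_abs_le r.1
      have hA0 := abs_nonneg r.1
      have hne1 : r.1 ≠ r.2 := by omega
      have hne2 : r.1 ≠ -r.2 := by omega
      rcases le_or_gt r.2 (p : ℤ) with hjp|hjp <;>
        rcases le_or_gt (|r.1|) (p : ℤ) with hip|hip
      · -- u block
        have hW' : W r.2 < W r.1 := by
          rw [← GU r.1 r.2 hip (by rw [abs_of_pos (by omega)]; omega)]
          rw [← Z1 r.1 hip, ← Z1 r.2 (by rw [abs_of_pos (by omega)]; omega)]
          exact h3
        exact CT r.1 r.2 hne1 hne2 (by omega) (by rw [abs_of_pos (by omega)]; omega)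
          (sh_orient hξ h1 (by omega) (Or.inr (Or.inl hjp))) hW'
      · exfalso; omega
      · -- mixed
        have hkt := (MIXG zd hczd (zd r.1) r.2 (hzd_small r.1 hip)
          (by rw [abs_of_pos (by omega)]; omega) (by rw [abs_of_pos (by omega)]; omega)).mp h3
        exact (MIXG x' hx' (x' r.1) r.2 (cc_small hx' hip)
          (by rw [abs_of_pos (by omega)]; omega) (by rw [abs_of_pos (by omega)]; omega)).mpr hkt
      · -- v block
        have hvm := VM r.1 r.2 hip (by omega) hjp h2
        have horient : ξ r.1 < ξ r.2 := by
          apply sh_orient hξ h1 (by omega)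
          rcases lt_trichotomy r.1 0 with h'|h'|h'
          · exact Or.inl (by omega)
          · exact Or.inl (by omega)
          · exact Or.inr (Or.inr (by rw [abs_of_pos h'] at hip; exact hip))
        by_cases kt : KS r.2 <;> by_cases ks : KS r.1
        · exact CT r.1 r.2 hne1 hne2 (by omega) (by rw [abs_of_pos (by omega)]; omega)
            horient ((hvm.1 kt ks).mp h3)
        · have a1 := (SGNB x' hx' r.2 (by rw [abs_of_pos (by omega)]; omega)
            (by rw [abs_of_pos (by omega)]; omega)).1 kt
          have a2 := (SGNB x' hx' r.1 hip (by omega)).2 ks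
          omega
        · exact absurd h3 (hvm.2.2.1 kt ks)
        · exact CT r.1 r.2 hne1 hne2 (by omega) (by rw [abs_of_pos (by omega)]; omega)
            horient ((hvm.2.2.2 kt ks).mp h3)
  · -- direction for joins: z is an upper bound
    intro x' hx' hxz
    have CT' : ∀ a b : ℤ, a ≠ b → a ≠ -b → |a| ≤ (p : ℤ) + q → |b| ≤ (p : ℤ) + q →
        ξ a < ξ b → x' b < x' a → W b < W a := by
      intro a b hne hne' hba hbb hlt hWc
      have hnx1 : ξ a ≠ ξ b := perm_ne hne
      have hnx2 : ξ a ≠ -(ξ b) := by rw [← hξ.1.1 b]; exact perm_ne hne'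
      obtain ⟨i', j', hc1, hc2, hor⟩ := canon hnx1 hnx2 (hξb a hba) (hξb b hbb)
      rcases hor with hL|hR
      · have hLz := hL z hz.1
        have hLx := hL (x' * ξ⁻¹) (sp_mul hx'.1 hξi).1
        simp only [Equiv.Perm.mul_apply, ξ.inv_apply_self] at hLx
        have hmem' : (i', j') ∈ NSet (p + q) (x' * ξ⁻¹) := by
          rw [mem_NSet']
          refine ⟨hc1, by rw [sh_cast]; omega, ?_⟩
          simp only [Equiv.Perm.mul_apply]
          exact hLx.mpr hWc
        have h6 := hxz hmem'
        rw [mem_NSet'] at h6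
        simp only [hW]
        exact hLz.mp h6.2.2
      · exfalso
        have h1R := hR 1 (fun r' => by simp)
        simp only [Equiv.Perm.one_apply] at h1R
        have g := le_abs_self i'
        omega
    constructor
    · -- L5a : NSet (zd ξ⁻¹) ⊆ NSet z
      intro r hr
      rw [mem_NSet] at hr ⊢
      obtain ⟨h1, h2, h3⟩ := hr
      rw [sh_cast] at h2
      refine ⟨h1, by rw [sh_cast]; omega, ?_⟩
      have hA1 := le_abs_self r.1
      have hA2 := neg_abs_le r.1
      have hA0 := abs_nonneg r.1
      have hts := sh_inv_pos hξ (i := r.2) (by omega) (by omega)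
      have hsb : |ξ⁻¹ r.1| ≤ (p : ℤ) + q := hξib r.1 (by omega)
      have hne1 : ξ⁻¹ r.1 ≠ ξ⁻¹ r.2 := perm_ne (by omega)
      have hzd3 : zd (ξ⁻¹ r.2) < zd (ξ⁻¹ r.1) := by
        simpa [Equiv.Perm.mul_apply] using h3
      have hWt : W (ξ⁻¹ r.2) = z r.2 := by simp only [hW]; rw [ξ.apply_inv_self]
      have hWs : W (ξ⁻¹ r.1) = z r.1 := by simp only [hW]; rw [ξ.apply_inv_self]
      have hxup : x' (ξ⁻¹ r.2) < x' (ξ⁻¹ r.1) → z r.2 < z r.1 := by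
        intro h7
        have h8 : r ∈ NSet (p + q) (x' * ξ⁻¹) := by
          rw [mem_NSet]
          refine ⟨h1, by rw [sh_cast]; omega, ?_⟩
          simpa [Equiv.Perm.mul_apply] using h7
        have h9 := hxz h8
        rw [mem_NSet] at h9
        exact h9.2.2
      rcases le_or_gt (ξ⁻¹ r.2) (p : ℤ) with htp|htp <;>
        rcases le_or_gt (|ξ⁻¹ r.1|) (p : ℤ) with hsp|hsp
      · rw [← hWt, ← hWs]
        rw [← GU _ _ hsp (by rw [abs_of_pos (by omega)]; omega)]
        rw [← Z1 _ hsp, ← Z1 _ (by rw [abs_of_pos (by omega)]; omega)]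
        exact hzd3
      · -- t small, s big
        have hks : ¬ KS (ξ⁻¹ r.1) :=
          (MIXG' zd hczd (zd (ξ⁻¹ r.2)) _ (hzd_small _ (by rw [abs_of_pos (by omega)]; omega))
            hsp hsb).mp hzd3
        apply hxup
        have h7 := (SGNB x' hx' _ hsp hsb).2 hks
        have h8 := cc_small hx' (a := ξ⁻¹ r.2) (by rw [abs_of_pos (by omega)]; omega)
        have g1 := le_abs_self (x' (ξ⁻¹ r.2))
        omega
      · -- t big, s small
        have hkt : KS (ξ⁻¹ r.2) :=
          (MIXG zd hczd (zd (ξ⁻¹ r.1)) _ (hzd_small _ hsp)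
            (by rw [abs_of_pos (by omega)]; omega) (by rw [abs_of_pos (by omega)]; omega)).mp hzd3
        apply hxup
        exact (MIXG x' hx' (x' (ξ⁻¹ r.1)) _ (cc_small hx' hsp)
          (by rw [abs_of_pos (by omega)]; omega) (by rw [abs_of_pos (by omega)]; omega)).mpr hkt
      · -- v block
        have hvm := VM (ξ⁻¹ r.1) (ξ⁻¹ r.2) hsp hsb htp hts.2
        by_cases kt : KS (ξ⁻¹ r.2) <;> by_cases ks : KS (ξ⁻¹ r.1)
        · rw [← hWt, ← hWs]
          exact (hvm.1 kt ks).mp hzd3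
        · apply hxup
          have a1 := (SGNB x' hx' _ (by rw [abs_of_pos (by omega)]; omega)
            (by rw [abs_of_pos (by omega)]; omega)).1 kt
          have a2 := (SGNB x' hx' _ hsp hsb).2 ks
          omega
        · exact absurd hzd3 (hvm.2.2.1 kt ks)
        · rw [← hWt, ← hWs]
          exact (hvm.2.2.2 kt ks).mp hzd3
    · -- L5b : NSet x' ⊆ NSet zd
      intro r hr
      rw [mem_NSet] at hr ⊢
      obtain ⟨h1, h2, h3⟩ := hr
      rw [sh_cast] at h2
      refine ⟨h1, by rw [sh_cast]; omega, ?_⟩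
      have hA1 := le_abs_self r.1
      have hA2 := neg_abs_le r.1
      have hA0 := abs_nonneg r.1
      have hne1 : r.1 ≠ r.2 := by omega
      have hne2 : r.1 ≠ -r.2 := by omega
      rcases le_or_gt r.2 (p : ℤ) with hjp|hjp <;>
        rcases le_or_gt (|r.1|) (p : ℤ) with hip|hip
      · -- u block
        have hW' : W r.2 < W r.1 := CT' r.1 r.2 hne1 hne2 (by omega)
          (by rw [abs_of_pos (by omega)]; omega)
          (sh_orient hξ h1 (by omega) (Or.inr (Or.inl hjp))) h3
        rw [Z1 r.1 hip, Z1 r.2 (by rw [abs_of_pos (by omega)]; omega)]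
        exact (GU r.1 r.2 hip (by rw [abs_of_pos (by omega)]; omega)).mpr hW'
      · exfalso; omega
      · -- mixed
        have hkt := (MIXG x' hx' (x' r.1) r.2 (cc_small hx' hip)
          (by rw [abs_of_pos (by omega)]; omega) (by rw [abs_of_pos (by omega)]; omega)).mp h3
        exact (MIXG zd hczd (zd r.1) r.2 (hzd_small r.1 hip)
          (by rw [abs_of_pos (by omega)]; omega) (by rw [abs_of_pos (by omega)]; omega)).mpr hkt
      · -- v block
        have hvm := VM r.1 r.2 hip (by omega) hjp h2
        have horient : ξ r.1 < ξ r.2 := by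
          apply sh_orient hξ h1 (by omega)
          rcases lt_trichotomy r.1 0 with h'|h'|h'
          · exact Or.inl (by omega)
          · exact Or.inl (by omega)
          · exact Or.inr (Or.inr (by rw [abs_of_pos h'] at hip; exact hip))
        by_cases kt : KS r.2 <;> by_cases ks : KS r.1
        · exact (hvm.1 kt ks).mpr (CT' r.1 r.2 hne1 hne2 (by omega)
            (by rw [abs_of_pos (by omega)]; omega) horient h3)
        · exact hvm.2.1 kt ks
        · exfalso
          have a1 := (SGNB x' hx' r.2 (by rw [abs_of_pos (by omega)]; omega)
            (by rw [abs_of_pos (by omega)]; omega)).2 kt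
          have a2 := (SGNB x' hx' r.1 hip (by omega)).1 ks
          omega
        · exact (hvm.2.2.2 kt ks).mpr (CT' r.1 r.2 hne1 hne2 (by omega)
            (by rw [abs_of_pos (by omega)]; omega) horient h3)

end Main

end TauAux

open TauAux

/-- For any `(p,q)`-shuffle `ξ` and `K ⊆ [q]`, the map
`τ_ξ : w ↦ w ξ⁻¹` is a convex embedding of `𝔅_p × 𝔅_{q,K}` into `𝔅_{p+q}`
(weak orders); in particular it preserves all meets and joins that exist. -/
theorem tau_convex_embedding (p q : ℕ) (ξ : Equiv.Perm ℤ) (hξ : IsShuffle p q ξ)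
    (K : Finset ℤ) (hK : K ⊆ Finset.Icc (1 : ℤ) (q : ℤ)) :
    Set.InjOn (fun w => w * ξ⁻¹) (SProdComp p q K) ∧
    (∀ a ∈ SProdComp p q K, ∀ b ∈ SProdComp p q K,
      (wle (p + q) a b ↔ wle (p + q) (a * ξ⁻¹) (b * ξ⁻¹))) ∧
    (∀ a ∈ SProdComp p q K, ∀ c ∈ SProdComp p q K, ∀ x ∈ SignedPerm (p + q),
      wle (p + q) (a * ξ⁻¹) x → wle (p + q) x (c * ξ⁻¹) →
        ∃ b ∈ SProdComp p q K, x = b * ξ⁻¹) ∧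
    (∀ x ∈ SProdComp p q K, ∀ y ∈ SProdComp p q K, ∀ m,
      IsMeetIn (p + q) (SProdComp p q K) x y m →
      IsMeetIn (p + q) (SignedPerm (p + q)) (x * ξ⁻¹) (y * ξ⁻¹) (m * ξ⁻¹)) ∧
    (∀ x ∈ SProdComp p q K, ∀ y ∈ SProdComp p q K, ∀ j,
      IsJoinIn (p + q) (SProdComp p q K) x y j →
      IsJoinIn (p + q) (SignedPerm (p + q)) (x * ξ⁻¹) (y * ξ⁻¹) (j * ξ⁻¹)) := by
  classical
  have hξi := sp_inv hξ.1
  refine ⟨?_, ?_, ?_, ?_, ?_⟩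
  · intro a _ b _ h
    simp only at h
    exact mul_right_cancel h
  · intro a ha b hb
    have hca := (comp_char hK).mp ha
    have hcb := (comp_char hK).mp hb
    rw [wle_iff hca.1 hcb.1, wle_iff (sp_mul hca.1 hξi) (sp_mul hcb.1 hξi)]
    exact P2 hξ hca hcb
  · intro a ha c hc x hx h1 h2
    exact ⟨x * ξ, part3 hξ hK ha hc hx h1 h2, (mul_inv_cancel_right x ξ).symm⟩
  · intro x hx y hy m hm
    obtain ⟨hmS, hmx, hmy, hmeet⟩ := hm
    have hcx := (comp_char hK).mp hx
    have hcy := (comp_char hK).mp hy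
    have hcm := (comp_char hK).mp hmS
    refine ⟨sp_mul hcm.1 hξi, ?_, ?_, ?_⟩
    · rw [wle_iff (sp_mul hcm.1 hξi) (sp_mul hcx.1 hξi)]
      exact (P2 hξ hcm hcx).mp ((wle_iff hcm.1 hcx.1).mp hmx)
    · rw [wle_iff (sp_mul hcm.1 hξi) (sp_mul hcy.1 hξi)]
      exact (P2 hξ hcm hcy).mp ((wle_iff hcm.1 hcy.1).mp hmy)
    · intro z hz hzx hzy
      rw [wle_iff hz (sp_mul hcx.1 hξi)] at hzx
      rw [wle_iff hz (sp_mul hcy.1 hξi)] at hzy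
      obtain ⟨zd, hzdmem, hdir4, _⟩ := zdag hξ hK hz
      have hczd := (comp_char hK).mp hzdmem
      obtain ⟨h4a, h4bx⟩ := hdir4 x hcx hzx
      obtain ⟨_, h4by⟩ := hdir4 y hcy hzy
      have hzdm := hmeet zd hzdmem ((wle_iff hczd.1 hcx.1).mpr h4bx)
        ((wle_iff hczd.1 hcy.1).mpr h4by)
      have hsub2 := (P2 hξ hczd hcm).mp ((wle_iff hczd.1 hcm.1).mp hzdm)
      rw [wle_iff hz (sp_mul hcm.1 hξi)]
      exact fun r hr => hsub2 (h4a hr)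
  · intro x hx y hy j hm
    obtain ⟨hjS, hxj, hyj, hjoin⟩ := hm
    have hcx := (comp_char hK).mp hx
    have hcy := (comp_char hK).mp hy
    have hcj := (comp_char hK).mp hjS
    refine ⟨sp_mul hcj.1 hξi, ?_, ?_, ?_⟩
    · rw [wle_iff (sp_mul hcx.1 hξi) (sp_mul hcj.1 hξi)]
      exact (P2 hξ hcx hcj).mp ((wle_iff hcx.1 hcj.1).mp hxj)
    · rw [wle_iff (sp_mul hcy.1 hξi) (sp_mul hcj.1 hξi)]
      exact (P2 hξ hcy hcj).mp ((wle_iff hcy.1 hcj.1).mp hyj)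
    · intro z hz hzx hzy
      rw [wle_iff (sp_mul hcx.1 hξi) hz] at hzx
      rw [wle_iff (sp_mul hcy.1 hξi) hz] at hzy
      obtain ⟨zd, hzdmem, _, hdir5⟩ := zdag hξ hK hz
      have hczd := (comp_char hK).mp hzdmem
      obtain ⟨h5a, h5bx⟩ := hdir5 x hcx hzx
      obtain ⟨_, h5by⟩ := hdir5 y hcy hzy
      have hjzd := hjoin zd hzdmem ((wle_iff hcx.1 hczd.1).mpr h5bx)
        ((wle_iff hcy.1 hczd.1).mpr h5by)
      have hsub2 := (P2 hξ hcj hczd).mp ((wle_iff hcj.1 hczd.1).mp hjzd)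
      rw [wle_iff (sp_mul hcj.1 hξi) hz]
      exact fun r hr => h5a (hsub2 hr)
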